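/- arXiv:2503.08503 — 12 statements merged into one kernel-verified Lean document; each statement's English description precedes it below -/
import Mathlib

section
/- For every (x,y) ∈ ℝ², the partial derivative of G with respect to y exists and equals −U_P'(z)·g'(y) + c·U_P''(z)·g'(y)² − c·U_P'(z)·g''(y), where z = x − U_A⁻¹(y) and g = U_A⁻¹; moreover this partial derivative is strictly negative. (This is the claim L_y(x,y,T) < 0 of the paper's Lemma on the signs of L_x, L_y at the terminal time.) -/
/-- The terminal value `G(x,y) = L(x,y,T)` of `L = w + c ∂_y w` in the principal–agent
problem: `G(x,y) = U_P(x − U_A⁻¹(y)) − c·U_P'(x − U_A⁻¹(y)) / U_A'(U_A⁻¹(y))`. -/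
noncomputable def G (UA UP : ℝ → ℝ) (c : ℝ) (x y : ℝ) : ℝ :=
  UP (x - Function.invFun UA y)
    - c * deriv UP (x - Function.invFun UA y) / deriv UA (Function.invFun UA y)

/-- For every `(x,y) ∈ ℝ²`, the partial derivative of `G` with respect to `y` exists and
equals `−U_P'(z)·g'(y) + c·U_P''(z)·g'(y)² − c·U_P'(z)·g''(y)` where `z = x − U_A⁻¹(y)`
and `g = U_A⁻¹`, and it is strictly negative (the claim `L_y(x,y,T) < 0`). -/
theorem stmt_1
    (UA UP : ℝ → ℝ) (c : ℝ) (hc : 0 < c)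
    (hUA : ContDiff ℝ 2 UA) (hUP : ContDiff ℝ 2 UP)
    (hUA' : ∀ z, 0 < deriv UA z) (hUA'' : ∀ z, deriv (deriv UA) z ≤ 0)
    (hUP' : ∀ z, 0 < deriv UP z) (hUP'' : ∀ z, deriv (deriv UP) z ≤ 0)
    (hbij : Function.Bijective UA) :
    ∀ x y : ℝ,
      HasDerivAt (fun y' => G UA UP c x y')
        (-(deriv UP (x - Function.invFun UA y)) * deriv (Function.invFun UA) y
          + c * deriv (deriv UP) (x - Function.invFun UA y)
              * (deriv (Function.invFun UA) y) ^ 2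
          - c * deriv UP (x - Function.invFun UA y)
              * deriv (deriv (Function.invFun UA)) y) y
      ∧ (-(deriv UP (x - Function.invFun UA y)) * deriv (Function.invFun UA) y
          + c * deriv (deriv UP) (x - Function.invFun UA y)
              * (deriv (Function.invFun UA) y) ^ 2
          - c * deriv UP (x - Function.invFun UA y)
              * deriv (deriv (Function.invFun UA)) y) < 0 := by
  set g := Function.invFun UA with hgdef
  have hUAd : Differentiable ℝ UA := hUA.differentiable (by norm_num)
  have hUA1 : ContDiff ℝ 1 (deriv UA) :=
    (contDiff_succ_iff_deriv.mp (show ContDiff ℝ ((1:ℕ∞)+1) UA by exact_mod_cast hUA)).2.2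
  have hUAdd : Differentiable ℝ (deriv UA) := hUA1.differentiable one_ne_zero
  have hUPd : Differentiable ℝ UP := hUP.differentiable (by norm_num)
  have hUP1 : ContDiff ℝ 1 (deriv UP) :=
    (contDiff_succ_iff_deriv.mp (show ContDiff ℝ ((1:ℕ∞)+1) UP by exact_mod_cast hUP)).2.2
  have hUPdd : Differentiable ℝ (deriv UP) := hUP1.differentiable one_ne_zero
  have hri : ∀ t, UA (g t) = t := fun t => Function.rightInverse_invFun hbij.2 t
  have hmono : StrictMono UA := strictMono_of_deriv_pos hUA'
  -- continuity of the inverse function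
  have hgcont : Continuous g := by
    have hfun : g = fun t => (StrictMono.orderIsoOfSurjective UA hmono hbij.2).symm t := by
      funext t
      apply hbij.1
      rw [hri]
      exact (StrictMono.orderIsoOfSurjective_self_symm_apply UA hmono hbij.2 t).symm
    rw [hfun]
    exact (StrictMono.orderIsoOfSurjective UA hmono hbij.2).symm.continuous
  -- first derivative of g
  have hg' : ∀ t, HasDerivAt g (deriv UA (g t))⁻¹ t := fun t =>
    HasDerivAt.of_local_left_inverse hgcont.continuousAt
      (hUAd (g t)).hasDerivAt (ne_of_gt (hUA' (g t)))
      (Filter.Eventually.of_forall hri)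
  have hgderiv : ∀ t, deriv g t = (deriv UA (g t))⁻¹ := fun t => (hg' t).deriv
  have hgda : ∀ t, HasDerivAt g (deriv g t) t := fun t =>
    (hg' t).differentiableAt.hasDerivAt
  have hgpos : ∀ t, 0 < deriv g t := by
    intro t; rw [hgderiv t]; exact inv_pos.mpr (hUA' (g t))
  -- second derivative of g
  have hg'' : ∀ t, HasDerivAt (deriv g)
      (-(deriv (deriv UA) (g t) * deriv g t) / (deriv UA (g t)) ^ 2) t := by
    intro t
    have hcomp : HasDerivAt (fun s => deriv UA (g s)) (deriv (deriv UA) (g t) * deriv g t) t :=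
      (hUAdd (g t)).hasDerivAt.comp t (hgda t)
    have hinv := hcomp.inv (ne_of_gt (hUA' (g t)))
    refine HasDerivAt.congr_of_eventuallyEq hinv ?_
    filter_upwards with s using (hgderiv s)
  have hg2 : ∀ t, HasDerivAt (deriv g) (deriv (deriv g) t) t := fun t =>
    (hg'' t).differentiableAt.hasDerivAt
  have hg''nonneg : ∀ t, 0 ≤ deriv (deriv g) t := by
    intro t
    rw [(hg'' t).deriv]
    apply div_nonneg
    · have := mul_nonpos_of_nonpos_of_nonneg (hUA'' (g t)) (hgpos t).le
      linarith
    · positivity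
  intro x y
  set z := x - g y with hz
  -- rewrite G using deriv g
  have hGeq : (fun y' => G UA UP c x y')
      = fun y' => UP (x - g y') - c * deriv UP (x - g y') * deriv g y' := by
    funext y'
    rw [G, hgderiv y']
    ring
  have hz' : HasDerivAt (fun y' => x - g y') (-(deriv g y)) y := by
    simpa using (hgda y).const_sub x
  have h1 : HasDerivAt (fun y' => UP (x - g y')) (deriv UP z * -(deriv g y)) y :=
    (hUPd z).hasDerivAt.comp y hz'
  have h2 : HasDerivAt (fun y' => c * deriv UP (x - g y'))
      (c * (deriv (deriv UP) z * -(deriv g y))) y :=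
    by have h2' := (hUPdd z).hasDerivAt.comp y hz'; exact h2'.const_mul c
  have h3 : HasDerivAt (fun y' => c * deriv UP (x - g y') * deriv g y')
      (c * (deriv (deriv UP) z * -(deriv g y)) * deriv g y
        + c * deriv UP z * deriv (deriv g) y) y := h2.mul (hg2 y)
  have hmain : HasDerivAt (fun y' => G UA UP c x y')
      (-(deriv UP z) * deriv g y
        + c * deriv (deriv UP) z * (deriv g y) ^ 2
        - c * deriv UP z * deriv (deriv g) y) y := by
    rw [hGeq]
    refine (h1.sub h3).congr_deriv ?_
    ring
  refine ⟨hmain, ?_⟩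
  have t1 : 0 < deriv UP z * deriv g y := mul_pos (hUP' z) (hgpos y)
  have t2 : c * deriv (deriv UP) z * (deriv g y) ^ 2 ≤ 0 :=
    mul_nonpos_of_nonpos_of_nonneg
      (mul_nonpos_of_nonneg_of_nonpos hc.le (hUP'' z)) (sq_nonneg _)
  have t3 : 0 ≤ c * deriv UP z * deriv (deriv g) y :=
    mul_nonneg (mul_pos hc (hUP' z)).le (hg''nonneg y)
  linarith
end

section
/- Fix l ∈ ℝ and suppose there exist x₀, y₀ ∈ ℝ with G(x₀, y₀) = l. Then for every x ∈ ℝ there exists a unique y ∈ ℝ with G(x, y) = l. (Existence and uniqueness of the terminal value v*(x,T) of the optimal contract in the paper's Proposition on the well-definedness of v*.) -/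
/-- Fix `l ∈ ℝ` and suppose there exist `x₀, y₀` with `G(x₀,y₀) = l`. Then for every `x`
there exists a unique `y` with `G(x,y) = l` (well-definedness of `v*(x,T)`). -/
theorem stmt_3
    (UA UP : ℝ → ℝ) (c : ℝ) (hc : 0 < c)
    (hUA : ContDiff ℝ 2 UA) (hUP : ContDiff ℝ 2 UP)
    (hUA' : ∀ z, 0 < deriv UA z) (hUA'' : ∀ z, deriv (deriv UA) z ≤ 0)
    (hUP' : ∀ z, 0 < deriv UP z) (hUP'' : ∀ z, deriv (deriv UP) z ≤ 0)
    (hbij : Function.Bijective UA)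
    (l x₀ y₀ : ℝ) (h₀ : G UA UP c x₀ y₀ = l) :
    ∀ x : ℝ, ∃! y : ℝ, G UA UP c x y = l := by
  intro x
  set g := Function.invFun UA with hg
  have hli : Function.LeftInverse g UA := Function.leftInverse_invFun hbij.injective
  have hri : Function.RightInverse g UA := Function.rightInverse_invFun hbij.surjective
  set F : ℝ → ℝ → ℝ := fun x a => UP (x - a) - c * deriv UP (x - a) / deriv UA a with hF
  have hGF : ∀ x y, G UA UP c x y = F x (g y) := fun _ _ => rfl
  -- smoothness consequences
  have hUP2 : ContDiff ℝ (1 + 1) UP := by norm_num; exact hUP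
  have hUA2 : ContDiff ℝ (1 + 1) UA := by norm_num; exact hUA
  have hdUP : ContDiff ℝ 1 (deriv UP) := (contDiff_succ_iff_deriv.mp hUP2).2.2
  have hdUA : ContDiff ℝ 1 (deriv UA) := (contDiff_succ_iff_deriv.mp hUA2).2.2
  have hUPm : StrictMono UP := strictMono_of_deriv_pos hUP'
  have hdUPa : Antitone (deriv UP) :=
    antitone_of_deriv_nonpos (hdUP.differentiable one_ne_zero) hUP''
  have hdUAa : Antitone (deriv UA) :=
    antitone_of_deriv_nonpos (hdUA.differentiable one_ne_zero) hUA''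
  -- F x is strictly antitone in a
  have hanti : StrictAnti (F x) := by
    intro a b hab
    have h1 : UP (x - b) < UP (x - a) := hUPm (by linarith)
    have h2 : deriv UP (x - a) ≤ deriv UP (x - b) := hdUPa (by linarith)
    have h3 : deriv UA b ≤ deriv UA a := hdUAa hab.le
    have h4 : c * deriv UP (x - a) / deriv UA a ≤ c * deriv UP (x - b) / deriv UA b := by
      apply div_le_div₀ (mul_nonneg hc.le (hUP' _).le) (by nlinarith [hUP' (x - a)]) (hUA' b) h3
    simp only [hF]
    linarith
  -- continuity of F x
  have hcont : Continuous (F x) := by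
    apply Continuous.sub
    · exact hUP.continuous.comp (continuous_const.sub continuous_id)
    · apply Continuous.div
      · exact continuous_const.mul
          (hdUP.continuous.comp (continuous_const.sub continuous_id))
      · exact hdUA.continuous
      · exact fun a => (hUA' a).ne'
  -- existence of a with F x a = l
  set a₀ := g y₀ with ha₀
  have h₀' : F x₀ a₀ = l := h₀
  have key : ∃ a, F x a = l := by
    set Δ := x - x₀ with hΔ
    have hend : F x (a₀ + Δ) = UP (x₀ - a₀)
        - c * deriv UP (x₀ - a₀) / deriv UA (a₀ + Δ) := by
      simp only [hF]
      rw [show x - (a₀ + Δ) = x₀ - a₀ by rw [hΔ]; ring]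
    rcases le_total x₀ x with hx | hx
    · -- Δ ≥ 0 : F x a₀ ≥ l ≥ F x (a₀+Δ)
      have hΔ0 : 0 ≤ Δ := by simp [hΔ]; linarith
      have hA : l ≤ F x a₀ := by
        have h1 : UP (x₀ - a₀) ≤ UP (x - a₀) := hUPm.monotone (by linarith)
        have h2 : deriv UP (x - a₀) ≤ deriv UP (x₀ - a₀) := hdUPa (by linarith)
        have h4 : c * deriv UP (x - a₀) / deriv UA a₀
            ≤ c * deriv UP (x₀ - a₀) / deriv UA a₀ := by
          apply div_le_div₀ (mul_nonneg hc.le (hUP' _).le) ?_ (hUA' a₀) le_rfl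
          nlinarith
        simp only [hF] at h₀' ⊢
        linarith
      have hB : F x (a₀ + Δ) ≤ l := by
        rw [hend]
        have h3 : deriv UA (a₀ + Δ) ≤ deriv UA a₀ := hdUAa (by linarith)
        have h4 : c * deriv UP (x₀ - a₀) / deriv UA a₀
            ≤ c * deriv UP (x₀ - a₀) / deriv UA (a₀ + Δ) :=
          div_le_div_of_nonneg_left (mul_nonneg hc.le (hUP' _).le) (hUA' _) h3
        simp only [hF] at h₀'
        linarith
      have : l ∈ Set.Icc (F x (a₀ + Δ)) (F x a₀) := ⟨hB, hA⟩
      have hIcc := intermediate_value_Icc' (by linarith : a₀ ≤ a₀ + Δ) hcont.continuousOn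
      obtain ⟨a, _, ha⟩ := hIcc this
      exact ⟨a, ha⟩
    · -- Δ ≤ 0
      have hΔ0 : Δ ≤ 0 := by simp [hΔ]; linarith
      have hA : F x a₀ ≤ l := by
        have h1 : UP (x - a₀) ≤ UP (x₀ - a₀) := hUPm.monotone (by linarith)
        have h2 : deriv UP (x₀ - a₀) ≤ deriv UP (x - a₀) := hdUPa (by linarith)
        have h4 : c * deriv UP (x₀ - a₀) / deriv UA a₀
            ≤ c * deriv UP (x - a₀) / deriv UA a₀ := by
          apply div_le_div₀ (mul_nonneg hc.le (hUP' _).le) ?_ (hUA' a₀) le_rfl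
          nlinarith
        simp only [hF] at h₀' ⊢
        linarith
      have hB : l ≤ F x (a₀ + Δ) := by
        rw [hend]
        have h3 : deriv UA a₀ ≤ deriv UA (a₀ + Δ) := hdUAa (by linarith)
        have h4 : c * deriv UP (x₀ - a₀) / deriv UA (a₀ + Δ)
            ≤ c * deriv UP (x₀ - a₀) / deriv UA a₀ :=
          div_le_div_of_nonneg_left (mul_nonneg hc.le (hUP' _).le) (hUA' _) h3
        simp only [hF] at h₀'
        linarith
      have : l ∈ Set.Icc (F x a₀) (F x (a₀ + Δ)) := ⟨hA, hB⟩
      have hIcc := intermediate_value_Icc' (by linarith : a₀ + Δ ≤ a₀) hcont.continuousOn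
      obtain ⟨a, _, ha⟩ := hIcc this
      exact ⟨a, ha⟩
  obtain ⟨a, ha⟩ := key
  refine ⟨UA a, ?_, ?_⟩
  · show G UA UP c x (UA a) = l
    rw [hGF, hli a]; exact ha
  · intro y' hy'
    rw [hGF] at hy'
    have : g y' = a := hanti.injective (hy'.trans ha.symm)
    have := congrArg UA this
    rwa [hri y'] at this
end

section
/- For all x₀, y₀ ∈ ℝ and all x > x₀: G(x, U_A(U_A⁻¹(y₀) + (x − x₀))) ≤ G(x₀, y₀) < G(x, y₀). (The two inequalities used in the paper's proof of existence of the terminal value v*(x,T): monotonicity of G in x gives the right inequality, and the decrease of U_A' gives the left inequality.) -/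
/-- For all `x₀, y₀` and all `x > x₀`:
`G(x, U_A(U_A⁻¹(y₀) + (x − x₀))) ≤ G(x₀, y₀) < G(x, y₀)`. -/
theorem stmt_4
    (UA UP : ℝ → ℝ) (c : ℝ) (hc : 0 < c)
    (hUA : ContDiff ℝ 2 UA) (hUP : ContDiff ℝ 2 UP)
    (hUA' : ∀ z, 0 < deriv UA z) (hUA'' : ∀ z, deriv (deriv UA) z ≤ 0)
    (hUP' : ∀ z, 0 < deriv UP z) (hUP'' : ∀ z, deriv (deriv UP) z ≤ 0)
    (hbij : Function.Bijective UA) :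
    ∀ x₀ y₀ x : ℝ, x₀ < x →
      G UA UP c x (UA (Function.invFun UA y₀ + (x - x₀))) ≤ G UA UP c x₀ y₀
      ∧ G UA UP c x₀ y₀ < G UA UP c x y₀ := by
  intro x₀ y₀ x hx
  have hli : ∀ z, Function.invFun UA (UA z) = z :=
    Function.leftInverse_invFun hbij.injective
  set a := Function.invFun UA y₀ with ha
  have h2A : ContDiff ℝ ((1 : ℕ∞) + 1) UA := by norm_cast
  have h2P : ContDiff ℝ ((1 : ℕ∞) + 1) UP := by norm_cast
  have hUA'd : Differentiable ℝ (deriv UA) :=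
    ((contDiff_succ_iff_deriv.mp h2A).2.2).differentiable (by simp)
  have hUP'd : Differentiable ℝ (deriv UP) :=
    ((contDiff_succ_iff_deriv.mp h2P).2.2).differentiable (by simp)
  have hAntA : Antitone (deriv UA) := by
    apply antitone_of_deriv_nonpos hUA'd hUA''
  have hAntP : Antitone (deriv UP) := by
    apply antitone_of_deriv_nonpos hUP'd hUP''
  have hMonoP : StrictMono UP :=
    strictMono_of_deriv_pos hUP'
  constructor
  · show UP (x - Function.invFun UA (UA (a + (x - x₀))))
      - c * deriv UP (x - Function.invFun UA (UA (a + (x - x₀))))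
        / deriv UA (Function.invFun UA (UA (a + (x - x₀))))
      ≤ UP (x₀ - a) - c * deriv UP (x₀ - a) / deriv UA a
    rw [hli]
    have he : x - (a + (x - x₀)) = x₀ - a := by ring
    rw [he]
    have hle : deriv UA (a + (x - x₀)) ≤ deriv UA a := hAntA (by linarith)
    have hdiv : c * deriv UP (x₀ - a) / deriv UA a
        ≤ c * deriv UP (x₀ - a) / deriv UA (a + (x - x₀)) :=
      div_le_div_of_nonneg_left (by have := hUP' (x₀ - a); positivity) (hUA' _) hle
    linarith
  · show UP (x₀ - a) - c * deriv UP (x₀ - a) / deriv UA a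
      < UP (x - a) - c * deriv UP (x - a) / deriv UA a
    have h1 : UP (x₀ - a) < UP (x - a) := hMonoP (by linarith)
    have h2 : c * deriv UP (x - a) / deriv UA a
        ≤ c * deriv UP (x₀ - a) / deriv UA a := by
      have h := hAntP (show x₀ - a ≤ x - a by linarith)
      rw [div_le_div_iff_of_pos_right (hUA' a)]
      nlinarith
    linarith
end

section
/- Fix l ∈ ℝ and x₀, y₀ ∈ ℝ with G(x₀, y₀) = l. If x > x₀ and y ∈ ℝ satisfies G(x, y) = l, then y₀ < y ≤ U_A(U_A⁻¹(y₀) + (x − x₀)); if x < x₀ and G(x, y) = l, then U_A(U_A⁻¹(y₀) − (x₀ − x)) ≤ y < y₀. (The sandwich bounds on v*(x,T) from the paper's Proposition on the well-definedness of v*.) -/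
/-- Sandwich bounds on `v*(x,T)`: if `G(x₀,y₀) = l`, `x > x₀` and `G(x,y) = l` then
`y₀ < y ≤ U_A(U_A⁻¹(y₀) + (x − x₀))`; if `x < x₀` and `G(x,y) = l` then
`U_A(U_A⁻¹(y₀) − (x₀ − x)) ≤ y < y₀`. -/
theorem stmt_5
    (UA UP : ℝ → ℝ) (c : ℝ) (hc : 0 < c)
    (hUA : ContDiff ℝ 2 UA) (hUP : ContDiff ℝ 2 UP)
    (hUA' : ∀ z, 0 < deriv UA z) (hUA'' : ∀ z, deriv (deriv UA) z ≤ 0)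
    (hUP' : ∀ z, 0 < deriv UP z) (hUP'' : ∀ z, deriv (deriv UP) z ≤ 0)
    (hbij : Function.Bijective UA)
    (l x₀ y₀ : ℝ) (h₀ : G UA UP c x₀ y₀ = l) :
    (∀ x y : ℝ, x₀ < x → G UA UP c x y = l →
      y₀ < y ∧ y ≤ UA (Function.invFun UA y₀ + (x - x₀)))
    ∧ (∀ x y : ℝ, x < x₀ → G UA UP c x y = l →
      UA (Function.invFun UA y₀ - (x₀ - x)) ≤ y ∧ y < y₀) := by
  -- basic differentiability facts
  have hUAd2 : ContDiff ℝ ((1:ℕ)+1) UA := by exact_mod_cast hUA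
  have hUPd2 : ContDiff ℝ ((1:ℕ)+1) UP := by exact_mod_cast hUP
  have hUA'd : Differentiable ℝ (deriv UA) :=
    (contDiff_succ_iff_deriv.mp hUAd2).2.2.differentiable (by norm_num)
  have hUP'd : Differentiable ℝ (deriv UP) :=
    (contDiff_succ_iff_deriv.mp hUPd2).2.2.differentiable (by norm_num)
  have hUAmono : StrictMono UA := strictMono_of_deriv_pos hUA'
  have hUPmono : StrictMono UP := strictMono_of_deriv_pos hUP'
  have hUA'anti : Antitone (deriv UA) := antitone_of_deriv_nonpos hUA'd hUA''
  have hUP'anti : Antitone (deriv UP) := antitone_of_deriv_nonpos hUP'd hUP''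
  have hinv : ∀ y, UA (Function.invFun UA y) = y :=
    fun y => Function.rightInverse_invFun hbij.2 y
  -- core comparison lemma
  have core : ∀ s s₀ a a₀ : ℝ, s < s₀ → a₀ ≤ a →
      UP s - c * deriv UP s / deriv UA a < UP s₀ - c * deriv UP s₀ / deriv UA a₀ := by
    intro s s₀ a a₀ hs ha
    have h1 : UP s < UP s₀ := hUPmono hs
    have h2 : deriv UP s₀ ≤ deriv UP s := hUP'anti hs.le
    have h3 : deriv UA a ≤ deriv UA a₀ := hUA'anti ha
    have h4 : c * deriv UP s₀ / deriv UA a₀ ≤ c * deriv UP s / deriv UA a := by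
      apply div_le_div₀ (mul_nonneg hc.le (hUP' s).le)
        (by nlinarith [hUP' s₀, hUP' s]) (hUA' a) h3
    linarith
  set a₀ := Function.invFun UA y₀ with ha₀
  have hy₀ : UA a₀ = y₀ := hinv y₀
  constructor
  · intro x y hx hG
    set a := Function.invFun UA y with ha
    have hya : UA a = y := hinv y
    have hGG : UP (x - a) - c * deriv UP (x - a) / deriv UA a
        = UP (x₀ - a₀) - c * deriv UP (x₀ - a₀) / deriv UA a₀ := by
      have := h₀; rw [← hG] at this; simpa [G] using this.symm
    constructor
    · by_contra h
      push_neg at h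
      have haa : a ≤ a₀ := by
        have : UA a ≤ UA a₀ := by rw [hya, hy₀]; exact h
        exact hUAmono.le_iff_le.mp this
      have := core (x₀ - a₀) (x - a) a₀ a (by linarith) haa
      linarith
    · by_contra h
      push_neg at h
      have haa : a₀ + (x - x₀) < a := by
        have : UA (a₀ + (x - x₀)) < UA a := by rw [hya]; exact h
        exact hUAmono.lt_iff_lt.mp this
      have := core (x - a) (x₀ - a₀) a a₀ (by linarith) (by linarith)
      linarith
  · intro x y hx hG
    set a := Function.invFun UA y with ha
    have hya : UA a = y := hinv y
    have hGG : UP (x - a) - c * deriv UP (x - a) / deriv UA a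
        = UP (x₀ - a₀) - c * deriv UP (x₀ - a₀) / deriv UA a₀ := by
      have := h₀; rw [← hG] at this; simpa [G] using this.symm
    have hlt : y < y₀ := by
      by_contra h
      push_neg at h
      have haa : a₀ ≤ a := by
        have : UA a₀ ≤ UA a := by rw [hya, hy₀]; exact h
        exact hUAmono.le_iff_le.mp this
      have := core (x - a) (x₀ - a₀) a a₀ (by linarith) haa
      linarith
    refine ⟨?_, hlt⟩
    by_contra h
    push_neg at h
    have haa : a < a₀ - (x₀ - x) := by
      have : UA a < UA (a₀ - (x₀ - x)) := by rw [hya]; exact h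
      exact hUAmono.lt_iff_lt.mp this
    have := core (x₀ - a₀) (x - a) a₀ a (by linarith) (by linarith)
    linarith
end

section
/- Fix l ∈ ℝ and suppose Y : ℝ → ℝ satisfies G(x, Y(x)) = l for all x ∈ ℝ, and set C(x) := U_A⁻¹(Y(x)). Then for all x' < x one has 0 < C(x) − C(x') ≤ x − x'. In particular C is strictly increasing, 1-Lipschitz, and satisfies a linear growth bound |C(x)| ≤ c₁(1 + |x|) for some constant c₁ > 0. (The continuity and linear growth of the optimal contract C*(·;l), i.e. that C*(·;l) belongs to the admissible class 𝒞.) -/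
/-- If `G(x, Y(x)) = l` for all `x` and `C(x) := U_A⁻¹(Y(x))`, then for all `x' < x`,
`0 < C(x) − C(x') ≤ x − x'`; in particular `C` is strictly increasing, 1-Lipschitz and
of linear growth `|C(x)| ≤ c₁(1 + |x|)` (the contract `C*(·;l)` belongs to `𝒞`). -/
theorem stmt_6
    (UA UP : ℝ → ℝ) (c : ℝ) (hc : 0 < c)
    (hUA : ContDiff ℝ 2 UA) (hUP : ContDiff ℝ 2 UP)
    (hUA' : ∀ z, 0 < deriv UA z) (hUA'' : ∀ z, deriv (deriv UA) z ≤ 0)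
    (hUP' : ∀ z, 0 < deriv UP z) (hUP'' : ∀ z, deriv (deriv UP) z ≤ 0)
    (hbij : Function.Bijective UA)
    (l : ℝ) (Y : ℝ → ℝ) (hY : ∀ x, G UA UP c x (Y x) = l)
    (C : ℝ → ℝ) (hC : ∀ x, C x = Function.invFun UA (Y x)) :
    (∀ x' x : ℝ, x' < x → 0 < C x - C x' ∧ C x - C x' ≤ x - x')
    ∧ StrictMono C
    ∧ LipschitzWith 1 C
    ∧ ∃ c₁ : ℝ, 0 < c₁ ∧ ∀ x : ℝ, |C x| ≤ c₁ * (1 + |x|) := by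
  -- differentiability of the derivatives
  have hUP'd : Differentiable ℝ (deriv UP) := by
    have h2 : ContDiff ℝ ((1:ℕ) + 1 : WithTop ℕ∞) UP := by
      exact_mod_cast hUP
    exact (contDiff_succ_iff_deriv.mp h2).2.2.differentiable (by norm_num)
  have hUA'd : Differentiable ℝ (deriv UA) := by
    have h2 : ContDiff ℝ ((1:ℕ) + 1 : WithTop ℕ∞) UA := by
      exact_mod_cast hUA
    exact (contDiff_succ_iff_deriv.mp h2).2.2.differentiable (by norm_num)
  have hUPmono : StrictMono UP := strictMono_of_deriv_pos hUP'
  have hUP'anti : Antitone (deriv UP) := antitone_of_deriv_nonpos hUP'd hUP''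
  have hUA'anti : Antitone (deriv UA) := antitone_of_deriv_nonpos hUA'd hUA''
  -- abbreviate
  set H : ℝ → ℝ → ℝ := fun u v => UP u - c * deriv UP u / deriv UA v with hH
  have hYH : ∀ x, H (x - C x) (C x) = l := by
    intro x
    have := hY x
    rw [G] at this
    rw [hH]
    simp only [← hC x] at this ⊢
    exact this
  -- strict monotonicity in u
  have hHu : ∀ v u1 u2, u1 < u2 → H u1 v < H u2 v := by
    intro v u1 u2 h12
    have h1 : UP u1 < UP u2 := hUPmono h12
    have h2 : deriv UP u2 ≤ deriv UP u1 := hUP'anti h12.le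
    have h3 : c * deriv UP u2 / deriv UA v ≤ c * deriv UP u1 / deriv UA v := by
      exact div_le_div_of_nonneg_right (mul_le_mul_of_nonneg_left h2 hc.le) (hUA' v).le
    simp only [hH]
    linarith
  -- antitone in v
  have hHv : ∀ u v1 v2, v1 ≤ v2 → H u v2 ≤ H u v1 := by
    intro u v1 v2 h12
    have ha2 : 0 < deriv UA v2 := hUA' v2
    have ha : deriv UA v2 ≤ deriv UA v1 := hUA'anti h12
    have hp : 0 < c * deriv UP u := mul_pos hc (hUP' u)
    have : c * deriv UP u / deriv UA v1 ≤ c * deriv UP u / deriv UA v2 :=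
      div_le_div_of_nonneg_left hp.le ha2 ha
    simp only [hH]
    linarith
  -- key lemma
  have key : ∀ x' x : ℝ, x' < x → 0 < C x - C x' ∧ C x - C x' ≤ x - x' := by
    intro x' x hxx
    have h1 : C x' < C x := by
      by_contra h
      push_neg at h
      have hu : x' - C x' < x - C x := by linarith
      have := (hHu (C x') _ _ hu).trans_le (hHv (x - C x) (C x) (C x') h)
      rw [hYH x', hYH x] at this
      exact lt_irrefl l this
    refine ⟨by linarith, ?_⟩
    by_contra h
    push_neg at h
    have hu : x - C x < x' - C x' := by linarith
    have := (hHv (x - C x) (C x') (C x) h1.le).trans_lt (hHu (C x') _ _ hu)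
    rw [hYH x, hYH x'] at this
    exact lt_irrefl l this
  refine ⟨key, ?_, ?_, ?_⟩
  · intro a b hab
    have := (key a b hab).1
    linarith
  · apply LipschitzWith.of_dist_le_mul
    intro a b
    rw [Real.dist_eq, Real.dist_eq, NNReal.coe_one, one_mul]
    rcases lt_trichotomy a b with h | h | h
    · have := key a b h
      rw [abs_of_nonpos (by linarith), abs_of_neg (by linarith)]
      linarith
    · simp [h]
    · have := key b a h
      rw [abs_of_nonneg (by linarith), abs_of_pos (by linarith)]
      linarith
  · refine ⟨|C 0| + 1, by positivity, fun x => ?_⟩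
    have h0 : |C x - C 0| ≤ |x| := by
      rcases lt_trichotomy x 0 with h | h | h
      · have := key x 0 h
        rw [abs_of_nonpos (by linarith), abs_of_neg h]; linarith
      · simp [h]
      · have := key 0 x h
        rw [abs_of_nonneg (by linarith), abs_of_pos h]; linarith
    have : |C x| ≤ |C 0| + |x| := by
      have := abs_sub_abs_le_abs_sub (C x) (C 0)
      linarith
    have hx : 0 ≤ |x| := abs_nonneg x
    have hc0 : 0 ≤ |C 0| := abs_nonneg _
    nlinarith
end

section
/- Let l ∈ ℝ and suppose C : ℝ → ℝ is differentiable and satisfies U_P(x − C(x)) − c·U_P'(x − C(x))/U_A'(C(x)) = l for all x ∈ ℝ. Then for every x, writing z = x − C(x), A = U_A'(C(x))²·U_P'(z) − c·U_A'(C(x))·U_P''(z) and B = c·U_A''(C(x))·U_P'(z), one has A > 0, A − B > 0, and C'(x) = A/(A − B). (The implicit differentiation formula for C*_x in the paper's growth lemma.) -/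
/-- Implicit differentiation of the optimal contract: if `C` is differentiable and
`U_P(x − C(x)) − c·U_P'(x − C(x))/U_A'(C(x)) = l` for all `x`, then with
`z = x − C(x)`, `A = U_A'(C(x))²·U_P'(z) − c·U_A'(C(x))·U_P''(z)` and
`B = c·U_A''(C(x))·U_P'(z)`, one has `A > 0`, `A − B > 0` and `C'(x) = A/(A − B)`. -/
theorem stmt_7
    (UA UP : ℝ → ℝ) (c : ℝ) (hc : 0 < c)
    (hUA : ContDiff ℝ 2 UA) (hUP : ContDiff ℝ 2 UP)
    (hUA' : ∀ z, 0 < deriv UA z) (hUA'' : ∀ z, deriv (deriv UA) z ≤ 0)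
    (hUP' : ∀ z, 0 < deriv UP z) (hUP'' : ∀ z, deriv (deriv UP) z ≤ 0)
    (hbij : Function.Bijective UA)
    (l : ℝ) (C : ℝ → ℝ) (hCdiff : Differentiable ℝ C)
    (heq : ∀ x : ℝ,
      UP (x - C x) - c * deriv UP (x - C x) / deriv UA (C x) = l) :
    ∀ x : ℝ,
      0 < (deriv UA (C x)) ^ 2 * deriv UP (x - C x)
            - c * deriv UA (C x) * deriv (deriv UP) (x - C x)
      ∧ 0 < ((deriv UA (C x)) ^ 2 * deriv UP (x - C x)
            - c * deriv UA (C x) * deriv (deriv UP) (x - C x))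
            - c * deriv (deriv UA) (C x) * deriv UP (x - C x)
      ∧ deriv C x =
          ((deriv UA (C x)) ^ 2 * deriv UP (x - C x)
            - c * deriv UA (C x) * deriv (deriv UP) (x - C x))
          / (((deriv UA (C x)) ^ 2 * deriv UP (x - C x)
            - c * deriv UA (C x) * deriv (deriv UP) (x - C x))
            - c * deriv (deriv UA) (C x) * deriv UP (x - C x)) := by
  have hUA2 : ContDiff ℝ ((1 : ℕ∞) + 1) UA := by
    convert hUA using 2
    norm_num
  have hUP2 : ContDiff ℝ ((1 : ℕ∞) + 1) UP := by
    convert hUP using 2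
    norm_num
  have hUAd : ContDiff ℝ 1 (deriv UA) := (contDiff_succ_iff_deriv.mp hUA2).2.2
  have hUPd : ContDiff ℝ 1 (deriv UP) := (contDiff_succ_iff_deriv.mp hUP2).2.2
  intro x
  set z := x - C x with hz
  set a := deriv UA (C x) with ha
  set a' := deriv (deriv UA) (C x) with ha'
  set p := deriv UP z with hp
  set p'' := deriv (deriv UP) z with hp''
  set C' := deriv C x with hC'
  have hapos : 0 < a := hUA' _
  have hppos : 0 < p := hUP' _
  have hA : 0 < a ^ 2 * p - c * a * p'' := by
    have h1 : 0 < a ^ 2 * p := by positivity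
    have h2 : c * a * p'' ≤ 0 :=
      mul_nonpos_of_nonneg_of_nonpos (by positivity) (hUP'' _)
    linarith
  have hB : c * a' * p ≤ 0 := by
    have : c * a' ≤ 0 := mul_nonpos_of_nonneg_of_nonpos hc.le (hUA'' _)
    exact mul_nonpos_of_nonpos_of_nonneg this hppos.le
  have hAB : 0 < (a ^ 2 * p - c * a * p'') - c * a' * p := by linarith
  refine ⟨hA, hAB, ?_⟩
  -- implicit differentiation
  have hzx : HasDerivAt (fun x : ℝ => x - C x) (1 - C') x :=
    (hasDerivAt_id x).sub (hCdiff x).hasDerivAt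
  have hUPat : HasDerivAt UP p z :=
    (hUP.differentiable (by norm_num) z).hasDerivAt
  have h1 : HasDerivAt (fun x : ℝ => UP (x - C x)) (p * (1 - C')) x :=
    hUPat.comp x hzx
  have hUP'at : HasDerivAt (deriv UP) p'' z :=
    (hUPd.differentiable one_ne_zero z).hasDerivAt
  have hN : HasDerivAt (fun x : ℝ => c * deriv UP (x - C x))
      (c * (p'' * (1 - C'))) x := by
    have h := hUP'at.comp x hzx
    exact h.const_mul c
  have hUA'at : HasDerivAt (deriv UA) a' (C x) :=
    (hUAd.differentiable one_ne_zero (C x)).hasDerivAt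
  have hD : HasDerivAt (fun x : ℝ => deriv UA (C x)) (a' * C') x :=
    hUA'at.comp x (hCdiff x).hasDerivAt
  have hQ : HasDerivAt (fun x : ℝ => c * deriv UP (x - C x) / deriv UA (C x))
      ((c * (p'' * (1 - C')) * a - c * p * (a' * C')) / a ^ 2) x :=
    hN.div hD (ne_of_gt hapos)
  have hg : HasDerivAt
      (fun x : ℝ => UP (x - C x) - c * deriv UP (x - C x) / deriv UA (C x))
      (p * (1 - C') - (c * (p'' * (1 - C')) * a - c * p * (a' * C')) / a ^ 2) x :=
    h1.sub hQ
  have hfun : (fun x : ℝ => UP (x - C x) - c * deriv UP (x - C x) / deriv UA (C x))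
      = fun _ => l := funext heq
  rw [hfun] at hg
  have hE : p * (1 - C') - (c * (p'' * (1 - C')) * a - c * p * (a' * C')) / a ^ 2 = 0 :=
    hg.unique (hasDerivAt_const x l)
  have ha0 : a ≠ 0 := ne_of_gt hapos
  have hkey : (1 - C') * (a ^ 2 * p - c * a * p'') + c * a' * p * C' = 0 := by
    field_simp at hE
    nlinarith [hE]
  have hd0 : (a ^ 2 * p - c * a * p'') - c * a' * p ≠ 0 := ne_of_gt hAB
  rw [eq_div_iff hd0]
  nlinarith [hkey]
end

section
/- Let l ∈ ℝ and suppose C : ℝ → ℝ is differentiable and satisfies U_P(x − C(x)) − c·U_P'(x − C(x))/U_A'(C(x)) = l for all x ∈ ℝ. Then 0 < C'(x) ≤ 1 for every x ∈ ℝ. (Consequence of the implicit differentiation formula for C*_x; in particular C*_x satisfies the growth bound required in the paper's growth lemma.) -/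
/-- If `C` is differentiable and `U_P(x − C(x)) − c·U_P'(x − C(x))/U_A'(C(x)) = l`
for all `x`, then `0 < C'(x) ≤ 1` for every `x`. -/
theorem stmt_8
    (UA UP : ℝ → ℝ) (c : ℝ) (hc : 0 < c)
    (hUA : ContDiff ℝ 2 UA) (hUP : ContDiff ℝ 2 UP)
    (hUA' : ∀ z, 0 < deriv UA z) (hUA'' : ∀ z, deriv (deriv UA) z ≤ 0)
    (hUP' : ∀ z, 0 < deriv UP z) (hUP'' : ∀ z, deriv (deriv UP) z ≤ 0)
    (hbij : Function.Bijective UA)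
    (l : ℝ) (C : ℝ → ℝ) (hCdiff : Differentiable ℝ C)
    (heq : ∀ x : ℝ,
      UP (x - C x) - c * deriv UP (x - C x) / deriv UA (C x) = l) :
    ∀ x : ℝ, 0 < deriv C x ∧ deriv C x ≤ 1 := by
  have hdUP : Differentiable ℝ (deriv UP) := by
    have h := (contDiff_succ_iff_deriv.mp (by exact_mod_cast hUP : ContDiff ℝ ((1:ℕ)+1) UP)).2.2
    exact h.differentiable (by simp)
  have hdUA : Differentiable ℝ (deriv UA) := by
    have h := (contDiff_succ_iff_deriv.mp (by exact_mod_cast hUA : ContDiff ℝ ((1:ℕ)+1) UA)).2.2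
    exact h.differentiable (by simp)
  intro x
  set d := deriv C x with hdx
  set y := x - C x with hy
  set u := C x with hu
  have hC : HasDerivAt C d x := (hCdiff x).hasDerivAt
  have h1 : HasDerivAt (fun t => t - C t) (1 - d) x := (hasDerivAt_id x).sub hC
  have h2 : HasDerivAt (fun t => UP (t - C t)) (deriv UP y * (1 - d)) x :=
    ((hUP.differentiable (by norm_num) y).hasDerivAt).comp x h1
  have h3 : HasDerivAt (fun t => deriv UP (t - C t)) (deriv (deriv UP) y * (1 - d)) x :=
    by have h := ((hdUP y).hasDerivAt).comp x h1; exact h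
  have h4 : HasDerivAt (fun t => deriv UA (C t)) (deriv (deriv UA) u * d) x :=
    ((hdUA u).hasDerivAt).comp x hC
  have hne : deriv UA u ≠ 0 := (hUA' u).ne'
  have h5 : HasDerivAt (fun t => c * deriv UP (t - C t) / deriv UA (C t))
      ((c * (deriv (deriv UP) y * (1 - d)) * deriv UA u -
        c * deriv UP y * (deriv (deriv UA) u * d)) / (deriv UA u)^2) x :=
    (h3.const_mul c).div h4 hne
  have h6 := h2.sub h5
  have hfun : ((fun t => UP (t - C t)) - fun t => c * deriv UP (t - C t) / deriv UA (C t))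
      = fun _ => l := funext heq
  rw [hfun] at h6
  have hzero := h6.unique (hasDerivAt_const x l)
  set p := deriv UP y
  set q := deriv (deriv UP) y
  set a := deriv UA u
  set r := deriv (deriv UA) u
  have hp : 0 < p := hUP' y
  have hq : q ≤ 0 := hUP'' y
  have ha : 0 < a := hUA' u
  have hr : r ≤ 0 := hUA'' u
  have hE : p * (1 - d) * a ^ 2 - c * q * (1 - d) * a + c * p * r * d = 0 := by
    field_simp at hzero
    nlinarith [hzero, sq_nonneg a]
  constructor
  · by_contra hle
    push_neg at hle
    nlinarith [mul_pos hp (mul_pos ha ha), mul_nonneg (mul_nonneg hc.le hp.le) (neg_nonneg.mpr hr), mul_nonneg (mul_nonneg hc.le (neg_nonneg.mpr hq)) ha.le]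
  · by_contra hgt
    push_neg at hgt
    nlinarith [mul_pos hp (mul_pos ha ha), mul_nonneg (mul_nonneg hc.le hp.le) (neg_nonneg.mpr hr), mul_nonneg (mul_nonneg hc.le (neg_nonneg.mpr hq)) ha.le]
end

section
/- Let I ⊆ ℝ be an open set and C : ℝ × I → ℝ satisfy U_P(x − C(x,l)) − c·U_P'(x − C(x,l))/U_A'(C(x,l)) = l for all (x,l) ∈ ℝ × I, with C differentiable in l. Fix l₀ ∈ I and suppose there is c₁ > 0 with |C(x,l₀)| ≤ c₁(1 + |x|) for all x ∈ ℝ. Then there exists a constant c₄ > 0, independent of x, such that |∂C/∂l (x, l₀)| ≥ (1/c₄)·e^{−c₄|x|} for all x ∈ ℝ. (The exponential lower bound on C*_l from the paper's growth lemma.) -/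
set_option maxHeartbeats 2000000

/-- Exponential lower bound on `C*_l`: if `C(x,l)` solves
`U_P(x − C(x,l)) − c·U_P'(x − C(x,l))/U_A'(C(x,l)) = l` on `ℝ × I` (`I` open), is
differentiable in `l`, and `x ↦ C(x,l₀)` has linear growth, then there is `c₄ > 0`,
independent of `x`, with `|∂C/∂l(x,l₀)| ≥ (1/c₄)·e^{−c₄|x|}` for all `x`. -/
theorem stmt_10
    (UA UP : ℝ → ℝ) (c : ℝ) (hc : 0 < c)
    (hUA : ContDiff ℝ 2 UA) (hUP : ContDiff ℝ 2 UP)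
    (hUA' : ∀ z, 0 < deriv UA z) (hUA'' : ∀ z, deriv (deriv UA) z ≤ 0)
    (hUP' : ∀ z, 0 < deriv UP z) (hUP'' : ∀ z, deriv (deriv UP) z ≤ 0)
    (hbij : Function.Bijective UA)
    (c₀ : ℝ) (hc₀ : 0 < c₀)
    (hUAlow : ∀ z : ℝ, (1 / c₀) * Real.exp (-c₀ * |z|) ≤ deriv UA z)
    (hUPlow : ∀ z : ℝ, (1 / c₀) * Real.exp (-c₀ * |z|) ≤ deriv UP z)
    (hUAup : ∀ z : ℝ, |deriv UA z| ≤ c₀ * (1 + Real.exp (c₀ * |z|)))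
    (hUPup : ∀ z : ℝ, |deriv UP z| ≤ c₀ * (1 + Real.exp (c₀ * |z|)))
    (hUAup2 : ∀ z : ℝ, |deriv (deriv UA) z| ≤ c₀ * (1 + Real.exp (c₀ * |z|)))
    (hUPup2 : ∀ z : ℝ, |deriv (deriv UP) z| ≤ c₀ * (1 + Real.exp (c₀ * |z|)))
    (I : Set ℝ) (hI : IsOpen I)
    (C : ℝ → ℝ → ℝ)
    (heq : ∀ x : ℝ, ∀ l ∈ I,
      UP (x - C x l) - c * deriv UP (x - C x l) / deriv UA (C x l) = l)
    (hCdiff : ∀ x : ℝ, ∀ l ∈ I, DifferentiableAt ℝ (C x) l)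
    (l₀ : ℝ) (hl₀ : l₀ ∈ I)
    (c₁ : ℝ) (hc₁ : 0 < c₁)
    (hgrowth : ∀ x : ℝ, |C x l₀| ≤ c₁ * (1 + |x|)) :
    ∃ c₄ : ℝ, 0 < c₄ ∧
      ∀ x : ℝ, (1 / c₄) * Real.exp (-c₄ * |x|) ≤ |deriv (C x) l₀| := by
  -- regularity of the derivatives
  have h2 : (2 : WithTop ℕ∞) = 1 + 1 := by norm_num
  have hUPd : Differentiable ℝ UP := hUP.differentiable (by norm_num)
  have hUAd : Differentiable ℝ UA := hUA.differentiable (by norm_num)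
  have hUPd' : Differentiable ℝ (deriv UP) :=
    ((contDiff_succ_iff_deriv.mp (h2 ▸ hUP)).2.2).differentiable one_ne_zero
  have hUAd' : Differentiable ℝ (deriv UA) :=
    ((contDiff_succ_iff_deriv.mp (h2 ▸ hUA)).2.2).differentiable one_ne_zero
  -- constants
  set A : ℝ := 4 * c₀ * (1 + c₁) with hA
  set B : ℝ := 2 * c₀ + 8 * c * c₀ ^ 4 with hB
  have hApos : 0 < A := by positivity
  have hBpos : 0 < B := by positivity
  refine ⟨B * Real.exp A + A + 1, by positivity, ?_⟩
  set c₄ : ℝ := B * Real.exp A + A + 1 with hc₄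
  have hc₄pos : 0 < c₄ := by positivity
  intro x
  set y₀ : ℝ := C x l₀ with hy₀
  set u1 : ℝ := deriv UP (x - y₀) with hu1
  set u2 : ℝ := deriv (deriv UP) (x - y₀) with hu2
  set a₀ : ℝ := deriv UA y₀ with ha₀
  set a1 : ℝ := deriv (deriv UA) y₀ with ha1
  have ha₀pos : 0 < a₀ := hUA' y₀
  -- derivative of the implicit function
  have hxy : HasDerivAt (fun y : ℝ => x - y) (-1) y₀ := by
    simpa using (hasDerivAt_id y₀).const_sub x
  have hcomp1 : HasDerivAt (fun y : ℝ => UP (x - y)) (u1 * (-1)) y₀ :=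
    ((hUPd (x - y₀)).hasDerivAt).comp y₀ hxy
  have hnum : HasDerivAt (fun y : ℝ => c * deriv UP (x - y)) (c * (u2 * (-1))) y₀ :=
    (((hUPd' (x - y₀)).hasDerivAt).comp y₀ hxy).const_mul c
  have hden : HasDerivAt (fun y : ℝ => deriv UA y) a1 y₀ := (hUAd' y₀).hasDerivAt
  have hdiv : HasDerivAt (fun y : ℝ => c * deriv UP (x - y) / deriv UA y)
      ((c * (u2 * (-1)) * a₀ - c * deriv UP (x - y₀) * a1) / a₀ ^ 2) y₀ :=
    hnum.div hden (ne_of_gt ha₀pos)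
  set D : ℝ := u1 * (-1) - (c * (u2 * (-1)) * a₀ - c * u1 * a1) / a₀ ^ 2 with hD
  have hg : HasDerivAt (fun y : ℝ => UP (x - y) - c * deriv UP (x - y) / deriv UA y) D y₀ :=
    hcomp1.sub hdiv
  have hC : HasDerivAt (C x) (deriv (C x) l₀) l₀ := (hCdiff x l₀ hl₀).hasDerivAt
  have hgC : HasDerivAt (fun l => UP (x - C x l) - c * deriv UP (x - C x l) / deriv UA (C x l))
      (D * deriv (C x) l₀) l₀ := hg.comp l₀ hC
  have hEv : (fun l : ℝ => l) =ᶠ[nhds l₀]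
      (fun l => UP (x - C x l) - c * deriv UP (x - C x l) / deriv UA (C x l)) :=
    Filter.eventuallyEq_of_mem (hI.mem_nhds hl₀) (fun l hl => (heq x l hl).symm)
  have hid : HasDerivAt (fun l : ℝ => l) (D * deriv (C x) l₀) l₀ :=
    hgC.congr_of_eventuallyEq hEv
  have hDC : D * deriv (C x) l₀ = 1 := (hasDerivAt_id l₀).unique hid |>.symm
  -- |D| * |C'| = 1
  have habs : |D| * |deriv (C x) l₀| = 1 := by rw [← abs_mul, hDC, abs_one]
  have hDpos : 0 < |D| := by
    rcases (abs_nonneg D).lt_or_eq with h | h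
    · exact h
    · exfalso; rw [← h] at habs; simp at habs
  -- growth bounds
  set M : ℝ := (1 + c₁) * (1 + |x|) with hM
  have hxabs : (0:ℝ) ≤ |x| := abs_nonneg x
  have hy₀M : |y₀| ≤ M := by
    have := hgrowth x
    rw [hM]; nlinarith
  have hxyM : |x - y₀| ≤ M := by
    have h1 := abs_sub_abs_le_abs_sub x y₀
    have := hgrowth x
    have := abs_sub_abs_le_abs_sub (x - y₀) (-y₀)
    have habs2 : |x - y₀| ≤ |x| + |y₀| := abs_sub x y₀
    rw [hM]; nlinarith
  set E : ℝ := Real.exp (c₀ * M) with hE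
  have hE1 : (1:ℝ) ≤ E := by
    rw [hE]; apply Real.one_le_exp; positivity
  have hEpos : (0:ℝ) < E := lt_of_lt_of_le one_pos hE1
  have hexpmono : ∀ z : ℝ, |z| ≤ M → Real.exp (c₀ * |z|) ≤ E := by
    intro z hz
    rw [hE]
    exact Real.exp_le_exp.mpr (by nlinarith)
  have hu1b : |u1| ≤ 2 * c₀ * E := by
    have := hUPup (x - y₀)
    have := hexpmono (x - y₀) hxyM
    rw [hu1]; nlinarith
  have hu2b : |u2| ≤ 2 * c₀ * E := by
    have := hUPup2 (x - y₀)
    have := hexpmono (x - y₀) hxyM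
    rw [hu2]; nlinarith
  have ha1b : |a1| ≤ 2 * c₀ * E := by
    have := hUAup2 y₀
    have := hexpmono y₀ hy₀M
    rw [ha1]; nlinarith
  have ha₀b : a₀ ≤ 2 * c₀ * E := by
    have h := hUAup y₀
    have := hexpmono y₀ hy₀M
    have : |a₀| ≤ 2 * c₀ * E := by nlinarith
    exact le_trans (le_abs_self a₀) this
  -- lower bound on a₀ : 1 ≤ a₀ * (c₀ * E)
  have ha₀low : 1 ≤ a₀ * (c₀ * E) := by
    have h := hUAlow y₀
    have hmono : Real.exp (-c₀ * M) ≤ Real.exp (-c₀ * |y₀|) := by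
      apply Real.exp_le_exp.mpr; nlinarith
    have h2 : (1 / c₀) * Real.exp (-c₀ * M) ≤ a₀ := by
      refine le_trans ?_ h
      gcongr
    have hEinv : Real.exp (-c₀ * M) = 1 / E := by
      rw [hE, one_div, ← Real.exp_neg]
      congr 1; ring
    rw [hEinv] at h2
    have h3 := mul_le_mul_of_nonneg_right h2 (by positivity : (0:ℝ) ≤ c₀ * E)
    calc (1:ℝ) = 1 / c₀ * (1 / E) * (c₀ * E) := by field_simp
      _ ≤ a₀ * (c₀ * E) := h3
  -- bound |D|
  have hNb : |c * (u2 * (-1)) * a₀ - c * u1 * a1| ≤ 8 * c * c₀ ^ 2 * E ^ 2 := by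
    have h1 : |c * (u2 * (-1)) * a₀| ≤ c * (2 * c₀ * E) * (2 * c₀ * E) := by
      rw [abs_mul, abs_mul, abs_of_pos hc, abs_of_pos ha₀pos]
      have : |u2 * (-1)| = |u2| := by rw [abs_mul]; simp
      rw [this]
      gcongr
    have h2 : |c * u1 * a1| ≤ c * (2 * c₀ * E) * (2 * c₀ * E) := by
      rw [abs_mul, abs_mul, abs_of_pos hc]
      gcongr
    have := abs_sub (c * (u2 * (-1)) * a₀) (c * u1 * a1)
    nlinarith
  have hdivb : |(c * (u2 * (-1)) * a₀ - c * u1 * a1) / a₀ ^ 2|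
      ≤ 8 * c * c₀ ^ 2 * E ^ 2 * (c₀ * E) ^ 2 := by
    rw [abs_div, abs_of_pos (by positivity : (0:ℝ) < a₀ ^ 2)]
    rw [div_le_iff₀ (by positivity)]
    have hN0 : (0:ℝ) ≤ |c * (u2 * (-1)) * a₀ - c * u1 * a1| := abs_nonneg _
    nlinarith [sq_nonneg (a₀ * (c₀ * E) - 1), sq_nonneg (a₀ * (c₀ * E))]
  have hDb : |D| ≤ B * E ^ 4 := by
    have htri : |D| ≤ |u1 * (-1)| + |(c * (u2 * (-1)) * a₀ - c * u1 * a1) / a₀ ^ 2| := by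
      rw [hD]; exact abs_sub _ _
    have h1 : |u1 * (-1)| = |u1| := by rw [abs_mul]; simp
    rw [h1] at htri
    have hE2 : E ≤ E ^ 4 := le_self_pow₀ hE1 (by norm_num)
    have hE2' : 2 * c₀ * E ≤ 2 * c₀ * E ^ 4 := by nlinarith
    have : 8 * c * c₀ ^ 2 * E ^ 2 * (c₀ * E) ^ 2 = 8 * c * c₀ ^ 4 * E ^ 4 := by ring
    rw [hB]; nlinarith
  -- final bound : |D| ≤ c₄ * exp (c₄ * |x|)
  have hE4 : E ^ 4 = Real.exp A * Real.exp (A * |x|) := by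
    rw [hE, ← Real.exp_nat_mul, ← Real.exp_add]
    congr 1
    rw [hM, hA]; push_cast; ring
  have hexpx : Real.exp (A * |x|) ≤ Real.exp (c₄ * |x|) := by
    apply Real.exp_le_exp.mpr
    have hA4 : A ≤ c₄ := by rw [hc₄]; nlinarith [Real.exp_pos A]
    nlinarith
  have hfinal : |D| ≤ c₄ * Real.exp (c₄ * |x|) := by
    have hBexp : B * Real.exp A ≤ c₄ := by rw [hc₄]; nlinarith
    have := hDb
    rw [hE4] at this
    calc |D| ≤ B * (Real.exp A * Real.exp (A * |x|)) := this
      _ = (B * Real.exp A) * Real.exp (A * |x|) := by ring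
      _ ≤ c₄ * Real.exp (c₄ * |x|) := by
          apply mul_le_mul hBexp hexpx (le_of_lt (Real.exp_pos _)) (le_of_lt hc₄pos)
  -- conclude
  have hC' : |deriv (C x) l₀| = 1 / |D| := by
    field_simp at habs ⊢
    linarith [habs]
  rw [hC']
  have hlhs : (1 / c₄) * Real.exp (-c₄ * |x|) = 1 / (c₄ * Real.exp (c₄ * |x|)) := by
    rw [neg_mul, Real.exp_neg]
    field_simp
  rw [hlhs]
  exact one_div_le_one_div_of_le hDpos hfinal
end

section
/- Let σ : ℝ → ℝ, c > 0, l ∈ ℝ. Let L : ℝ³ → ℝ (arguments written (x, v, s)) be twice continuously differentiable with L_v(x,v,s) < 0 for all (x,v,s), and suppose L satisfies L_s + (σ(x)²/2)·L_{xx} = (σ(x)²/(2c))·L_x²/L_v + σ(x)²·L_x·L_{xv}/L_v − (σ(x)²/2)·L_x²·L_{vv}/L_v² at every point. Let v : ℝ × ℝ → ℝ (arguments (x,s)) be twice continuously differentiable and satisfy L(x, v(x,s), s) = l for all (x,s). Then v satisfies v_s + (σ(x)²/2)·v_{xx} + (σ(x)²/(2c))·v_x² = 0 at every point (x,s). (The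 key computation in the proof of the paper's equivalence theorem u = w: the level-set function v* of L solves the agent's HJB equation.) -/
/-- First partial derivative in the 1st argument of a function of three real variables. -/
noncomputable def p1 (f : ℝ → ℝ → ℝ → ℝ) (x y t : ℝ) : ℝ := deriv (fun a => f a y t) x
/-- First partial derivative in the 2nd argument. -/
noncomputable def p2 (f : ℝ → ℝ → ℝ → ℝ) (x y t : ℝ) : ℝ := deriv (fun b => f x b t) y
/-- First partial derivative in the 3rd argument. -/
noncomputable def p3 (f : ℝ → ℝ → ℝ → ℝ) (x y t : ℝ) : ℝ := deriv (fun s => f x y s) t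
/-- Second partial derivative in the 1st argument. -/
noncomputable def p11 (f : ℝ → ℝ → ℝ → ℝ) : ℝ → ℝ → ℝ → ℝ := p1 (p1 f)
/-- Mixed second partial derivative (first in the 1st, then in the 2nd argument). -/
noncomputable def p12 (f : ℝ → ℝ → ℝ → ℝ) : ℝ → ℝ → ℝ → ℝ := p2 (p1 f)
/-- Second partial derivative in the 2nd argument. -/
noncomputable def p22 (f : ℝ → ℝ → ℝ → ℝ) : ℝ → ℝ → ℝ → ℝ := p2 (p2 f)

/-- Partial derivative in the first variable of a function of `(x,s)`. -/
noncomputable def qX (f : ℝ → ℝ → ℝ) (x s : ℝ) : ℝ := deriv (fun a => f a s) x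
/-- Partial derivative in the second variable of a function of `(x,s)`. -/
noncomputable def qS (f : ℝ → ℝ → ℝ) (x s : ℝ) : ℝ := deriv (fun b => f x b) s
/-- Second partial derivative in the first variable of a function of `(x,s)`. -/
noncomputable def qXX (f : ℝ → ℝ → ℝ) (x s : ℝ) : ℝ := deriv (fun a => qX f a s) x

/-- Key computation in the equivalence theorem `u = w`: if `L(x,v,s)` is `C²` with
`L_v < 0` and satisfies
`L_s + (σ²/2)L_{xx} = (σ²/(2c))L_x²/L_v + σ²L_xL_{xv}/L_v − (σ²/2)L_x²L_{vv}/L_v²`,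
and the `C²` function `v(x,s)` satisfies `L(x, v(x,s), s) = l` for all `(x,s)`, then
`v_s + (σ²/2)v_{xx} + (σ²/(2c))v_x² = 0` everywhere. -/
theorem stmt_13
    (σ : ℝ → ℝ) (c : ℝ) (hc : 0 < c) (l : ℝ)
    (L : ℝ → ℝ → ℝ → ℝ)
    (hL : ContDiff ℝ 2 (fun p : ℝ × ℝ × ℝ => L p.1 p.2.1 p.2.2))
    (hLv : ∀ x v s : ℝ, p2 L x v s < 0)
    (hPDE : ∀ x v s : ℝ,
      p3 L x v s + σ x ^ 2 / 2 * p11 L x v s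
        = σ x ^ 2 / (2 * c) * (p1 L x v s) ^ 2 / p2 L x v s
          + σ x ^ 2 * p1 L x v s * p12 L x v s / p2 L x v s
          - σ x ^ 2 / 2 * (p1 L x v s) ^ 2 * p22 L x v s / (p2 L x v s) ^ 2)
    (v : ℝ → ℝ → ℝ)
    (hv : ContDiff ℝ 2 (fun p : ℝ × ℝ => v p.1 p.2))
    (hlev : ∀ x s : ℝ, L x (v x s) s = l) :
    ∀ x s : ℝ,
      qS v x s + σ x ^ 2 / 2 * qXX v x s + σ x ^ 2 / (2 * c) * (qX v x s) ^ 2 = 0 := by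
  intro x s
  set F : ℝ × ℝ × ℝ → ℝ := fun p => L p.1 p.2.1 p.2.2 with hFdef
  set V : ℝ × ℝ → ℝ := fun p => v p.1 p.2 with hVdef
  have hFd : Differentiable ℝ F := (hL.of_le one_le_two).differentiable one_ne_zero
  have hF'd : Differentiable ℝ (fderiv ℝ F) :=
    (hL.fderiv_right (m := 1) (by norm_num)).differentiable one_ne_zero
  have hVd : Differentiable ℝ V := (hv.of_le one_le_two).differentiable one_ne_zero
  have hV'd : Differentiable ℝ (fderiv ℝ V) :=
    (hv.fderiv_right (m := 1) (by norm_num)).differentiable one_ne_zero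
  set P : ℝ × ℝ × ℝ := (x, v x s, s) with hPdef
  set D := fderiv ℝ F P with hDdef
  set D2 := fderiv ℝ (fderiv ℝ F) P with hD2def
  set D2v := fderiv ℝ (fderiv ℝ V) (x, s) with hD2vdef
  -- partial derivative of v in x, as a function of a
  set vX : ℝ → ℝ := fun a => fderiv ℝ V (a, s) (1, 0) with hvXdef
  have hvx : ∀ a : ℝ, HasDerivAt (fun a' => v a' s) (vX a) a := fun a =>
    (hVd (a, s)).hasFDerivAt.comp_hasDerivAt (l := V) a
      ((hasDerivAt_id a).prodMk (hasDerivAt_const a s))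
  have hqXv : ∀ a : ℝ, qX v a s = vX a := fun a => (hvx a).deriv
  -- partial derivative of v in s at (x,s)
  have hvs : HasDerivAt (fun b => v x b) (fderiv ℝ V (x, s) (0, 1)) s :=
    (hVd (x, s)).hasFDerivAt.comp_hasDerivAt s
      ((hasDerivAt_const s x).prodMk (hasDerivAt_id s))
  have hqSv : qS v x s = fderiv ℝ V (x, s) (0, 1) := hvs.deriv
  -- the x-curve
  have hγ : ∀ a : ℝ, HasDerivAt (fun a' => ((a' : ℝ), v a' s, s)) ((1 : ℝ), vX a, (0 : ℝ)) a :=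
    fun a => (hasDerivAt_id a).prodMk ((hvx a).prodMk (hasDerivAt_const a s))
  -- first-order identity in x, at every a
  have heq1 : ∀ a : ℝ, fderiv ℝ F (a, v a s, s) ((1 : ℝ), vX a, (0 : ℝ)) = 0 := by
    intro a
    have h1 : HasDerivAt (fun a' => F (a', v a' s, s))
        (fderiv ℝ F (a, v a s, s) ((1 : ℝ), vX a, (0 : ℝ))) a :=
      (hFd _).hasFDerivAt.comp_hasDerivAt a (hγ a)
    have h2 : (fun a' => F (a', v a' s, s)) = fun _ => l := funext fun a' => hlev a' s
    rw [h2] at h1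
    simpa using h1.unique (hasDerivAt_const a l)
  -- first-order identity in s
  have heq2 : D ((0 : ℝ), fderiv ℝ V (x, s) (0, 1), (1 : ℝ)) = 0 := by
    have h1 : HasDerivAt (fun b => F (x, v x b, b))
        (D ((0 : ℝ), fderiv ℝ V (x, s) (0, 1), (1 : ℝ))) s :=
      (hFd P).hasFDerivAt.comp_hasDerivAt (l := F) s
        ((hasDerivAt_const s x).prodMk (hvs.prodMk (hasDerivAt_id s)))
    have h2 : (fun b => F (x, v x b, b)) = fun _ => l := funext fun b => hlev x b
    rw [h2] at h1
    simpa using h1.unique (hasDerivAt_const s l)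
  -- derivative of a ↦ vX a
  have hvX' : HasDerivAt vX (D2v (1, 0) (1, 0)) x := by
    have h1 : HasDerivAt (fun a => fderiv ℝ V (a, s)) (D2v (1, 0)) x :=
      (hV'd (x, s)).hasFDerivAt.comp_hasDerivAt x
        ((hasDerivAt_id x).prodMk (hasDerivAt_const x s))
    have h2 := h1.clm_apply (hasDerivAt_const x ((1 : ℝ), (0 : ℝ)))
    simpa using h2
  have hqXX : qXX v x s = D2v (1, 0) (1, 0) := by
    have h2 : (fun a => qX v a s) = vX := funext hqXv
    show deriv (fun a => qX v a s) x = _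
    rw [h2]; exact hvX'.deriv
  -- second-order identity in x
  have heq3 : D2 ((1 : ℝ), vX x, (0 : ℝ)) ((1 : ℝ), vX x, (0 : ℝ))
      + D ((0 : ℝ), D2v (1, 0) (1, 0), (0 : ℝ)) = 0 := by
    have hg : HasDerivAt (fun a => fderiv ℝ F (a, v a s, s)) (D2 ((1 : ℝ), vX x, (0 : ℝ))) x :=
      (hF'd P).hasFDerivAt.comp_hasDerivAt x (hγ x)
    have hw : HasDerivAt (fun a => ((1 : ℝ), vX a, (0 : ℝ)))
        ((0 : ℝ), D2v (1, 0) (1, 0), (0 : ℝ)) x :=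
      (hasDerivAt_const x (1 : ℝ)).prodMk (hvX'.prodMk (hasDerivAt_const x (0 : ℝ)))
    have h1 := hg.clm_apply hw
    have h2 : (fun a => fderiv ℝ F (a, v a s, s) ((1 : ℝ), vX a, (0 : ℝ))) = fun _ => (0 : ℝ) :=
      funext heq1
    rw [h2] at h1
    simpa using h1.unique (hasDerivAt_const x (0 : ℝ))
  -- identify the partial derivatives of L at P
  have hp1 : ∀ a y t : ℝ, p1 L a y t = fderiv ℝ F (a, y, t) (1, 0, 0) := fun a y t =>
    ((hFd (a, y, t)).hasFDerivAt.comp_hasDerivAt (l := F) a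
      ((hasDerivAt_id a).prodMk ((hasDerivAt_const a y).prodMk (hasDerivAt_const a t)))).deriv
  have hp2 : ∀ a y t : ℝ, p2 L a y t = fderiv ℝ F (a, y, t) (0, 1, 0) := fun a y t =>
    ((hFd (a, y, t)).hasFDerivAt.comp_hasDerivAt (l := F) y
      ((hasDerivAt_const y a).prodMk ((hasDerivAt_id y).prodMk (hasDerivAt_const y t)))).deriv
  have hp3 : p3 L x (v x s) s = D (0, 0, 1) :=
    ((hFd P).hasFDerivAt.comp_hasDerivAt (l := F) s
      ((hasDerivAt_const s x).prodMk ((hasDerivAt_const s (v x s)).prodMk (hasDerivAt_id s)))).deriv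
  have hp11 : p11 L x (v x s) s = D2 (1, 0, 0) (1, 0, 0) := by
    have h2 : (fun a => p1 L a (v x s) s) = fun a => fderiv ℝ F (a, v x s, s) (1, 0, 0) :=
      funext fun a => hp1 a (v x s) s
    show deriv (fun a => p1 L a (v x s) s) x = _
    rw [h2]
    have hg : HasDerivAt (fun a => fderiv ℝ F (a, v x s, s)) (D2 ((1 : ℝ), (0 : ℝ), (0 : ℝ))) x :=
      (hF'd P).hasFDerivAt.comp_hasDerivAt x
        ((hasDerivAt_id x).prodMk ((hasDerivAt_const x (v x s)).prodMk (hasDerivAt_const x s)))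
    have := hg.clm_apply (hasDerivAt_const x ((1 : ℝ), (0 : ℝ), (0 : ℝ)))
    simpa using this.deriv
  have hp12 : p12 L x (v x s) s = D2 (0, 1, 0) (1, 0, 0) := by
    have h2 : (fun b => p1 L x b s) = fun b => fderiv ℝ F (x, b, s) (1, 0, 0) :=
      funext fun b => hp1 x b s
    show deriv (fun b => p1 L x b s) (v x s) = _
    rw [h2]
    have hg : HasDerivAt (fun b => fderiv ℝ F (x, b, s)) (D2 ((0 : ℝ), (1 : ℝ), (0 : ℝ))) (v x s) :=
      (hF'd P).hasFDerivAt.comp_hasDerivAt (v x s)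
        ((hasDerivAt_const (v x s) x).prodMk ((hasDerivAt_id (v x s)).prodMk (hasDerivAt_const (v x s) s)))
    have := hg.clm_apply (hasDerivAt_const (v x s) ((1 : ℝ), (0 : ℝ), (0 : ℝ)))
    simpa using this.deriv
  have hp22 : p22 L x (v x s) s = D2 (0, 1, 0) (0, 1, 0) := by
    have h2 : (fun b => p2 L x b s) = fun b => fderiv ℝ F (x, b, s) (0, 1, 0) :=
      funext fun b => hp2 x b s
    show deriv (fun b => p2 L x b s) (v x s) = _
    rw [h2]
    have hg : HasDerivAt (fun b => fderiv ℝ F (x, b, s)) (D2 ((0 : ℝ), (1 : ℝ), (0 : ℝ))) (v x s) :=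
      (hF'd P).hasFDerivAt.comp_hasDerivAt (v x s)
        ((hasDerivAt_const (v x s) x).prodMk ((hasDerivAt_id (v x s)).prodMk (hasDerivAt_const (v x s) s)))
    have := hg.clm_apply (hasDerivAt_const (v x s) ((0 : ℝ), (1 : ℝ), (0 : ℝ)))
    simpa using this.deriv
  -- symmetry of second derivatives
  have hsymm : ∀ w w' : ℝ × ℝ × ℝ, D2 w w' = D2 w' w :=
    second_derivative_symmetric (fun y => (hFd y).hasFDerivAt) (hF'd P).hasFDerivAt
  -- abbreviations
  set A := D (1, 0, 0) with hA
  set B := D (0, 1, 0) with hB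
  set C := D (0, 0, 1) with hC
  set X := D2 (1, 0, 0) (1, 0, 0) with hX
  set Y := D2 (1, 0, 0) (0, 1, 0) with hY
  set Z := D2 (0, 1, 0) (0, 1, 0) with hZ
  set p := vX x with hp
  set q := fderiv ℝ V (x, s) (0, 1) with hq
  set r := D2v (1, 0) (1, 0) with hr
  -- linear expansions
  have hvec1 : ∀ t : ℝ, ((1 : ℝ), t, (0 : ℝ)) = ((1 : ℝ), (0 : ℝ), (0 : ℝ)) + t • ((0 : ℝ), (1 : ℝ), (0 : ℝ)) := by
    intro t; simp [Prod.ext_iff]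
  have hvec2 : ∀ t : ℝ, ((0 : ℝ), t, (1 : ℝ)) = t • ((0 : ℝ), (1 : ℝ), (0 : ℝ)) + ((0 : ℝ), (0 : ℝ), (1 : ℝ)) := by
    intro t; simp [Prod.ext_iff]
  have hvec3 : ∀ t : ℝ, ((0 : ℝ), t, (0 : ℝ)) = t • ((0 : ℝ), (1 : ℝ), (0 : ℝ)) := by
    intro t; simp [Prod.ext_iff]
  have e1 : A + p * B = 0 := by
    have := heq1 x
    rw [hvec1 (vX x), map_add, map_smul] at this
    simpa [smul_eq_mul, mul_comm] using this
  have e2 : q * B + C = 0 := by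
    have := heq2
    rw [hvec2 q, map_add, map_smul] at this
    simpa [smul_eq_mul, mul_comm] using this
  have e3 : X + p * Y + p * Y + p * (p * Z) + r * B = 0 := by
    have h := heq3
    rw [hvec3 r, map_smul] at h
    rw [hvec1 (vX x), map_add, map_smul] at h
    simp only [ContinuousLinearMap.add_apply, ContinuousLinearMap.smul_apply, map_add, map_smul,
      smul_eq_mul] at h
    have hsw : D2 (0, 1, 0) (1, 0, 0) = Y := hsymm _ _
    rw [hsw] at h
    linarith [h]
  have hPDE' : C + σ x ^ 2 / 2 * X
      = σ x ^ 2 / (2 * c) * A ^ 2 / B + σ x ^ 2 * A * Y / B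
        - σ x ^ 2 / 2 * A ^ 2 * Z / B ^ 2 := by
    have := hPDE x (v x s) s
    rw [hp1 x (v x s) s, hp2 x (v x s) s, hp3, hp11, hp12, hp22] at this
    rw [hsymm (0,1,0) (1,0,0)] at this
    exact this
  have hBneg : B < 0 := by
    have := hLv x (v x s) s
    rwa [hp2 x (v x s) s] at this
  have hBne : B ≠ 0 := ne_of_lt hBneg
  -- now pure algebra
  rw [hqSv, hqXX, hqXv x]
  show q + σ x ^ 2 / 2 * r + σ x ^ 2 / (2 * c) * p ^ 2 = 0
  have hA' : A = -(p * B) := by linarith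
  have hq' : q = -C / B := by field_simp; linarith
  have hr' : r = -(X + p * Y + p * Y + p * (p * Z)) / B := by field_simp; linarith
  rw [hA'] at hPDE'
  rw [hq', hr']
  have hcne : c ≠ 0 := ne_of_gt hc
  field_simp at hPDE' ⊢
  have key : (C * 2 + σ x ^ 2 * X) * (4 * c)
      = 4 * σ x ^ 2 * p ^ 2 * B - 8 * c * σ x ^ 2 * p * Y - 4 * c * σ x ^ 2 * p ^ 2 * Z := by
    have h4 : B ^ 4 ≠ 0 := pow_ne_zero 4 hBne
    apply mul_left_cancel₀ h4
    linear_combination 4 * B ^ 4 * hPDE'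
  linear_combination (-(1 / 4 : ℝ)) * key
end

section
/- Let σ : ℝ → ℝ and c > 0. Let w : ℝ³ → ℝ (arguments (x, y, t)) be three times continuously differentiable, define L := w + c·∂_y w, and suppose L_y(x,y,t) ≠ 0 for all (x,y,t) and that w satisfies w_t + (σ(x)²/2)·w_{xx} = (σ(x)²/(2c))·L_x²/L_y at every point. Then L satisfies L_t + (σ(x)²/2)·L_{xx} = (σ(x)²/(2c))·L_x²/L_y + σ(x)²·L_x·L_{xy}/L_y − (σ(x)²/2)·L_x²·L_{yy}/L_y² at every point. (Obtained in the paper by differentiating the equation for w with respect to y and adding; equation (equ_L).) -/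
private def e1 : ℝ × ℝ × ℝ := (1, 0, 0)
private def e2 : ℝ × ℝ × ℝ := (0, 1, 0)
private def e3 : ℝ × ℝ × ℝ := (0, 0, 1)

/-- Directional partial derivative of an uncurried function. -/
private noncomputable def pd (G : ℝ × ℝ × ℝ → ℝ) (v q : ℝ × ℝ × ℝ) : ℝ := fderiv ℝ G q v

private lemma hasD1 {G : ℝ × ℝ × ℝ → ℝ} {x y t : ℝ} (hG : DifferentiableAt ℝ G (x, y, t)) :
    HasDerivAt (fun a => G (a, y, t)) (pd G e1 (x, y, t)) x :=
  hG.hasFDerivAt.comp_hasDerivAt x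
    ((hasDerivAt_id x).prodMk (hasDerivAt_const x (y, t)))

private lemma hasD2 {G : ℝ × ℝ × ℝ → ℝ} {x y t : ℝ} (hG : DifferentiableAt ℝ G (x, y, t)) :
    HasDerivAt (fun b => G (x, b, t)) (pd G e2 (x, y, t)) y :=
  hG.hasFDerivAt.comp_hasDerivAt y
    ((hasDerivAt_const y x).prodMk ((hasDerivAt_id y).prodMk (hasDerivAt_const y t)))

private lemma hasD3 {G : ℝ × ℝ × ℝ → ℝ} {x y t : ℝ} (hG : DifferentiableAt ℝ G (x, y, t)) :
    HasDerivAt (fun s => G (x, y, s)) (pd G e3 (x, y, t)) t :=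
  hG.hasFDerivAt.comp_hasDerivAt t
    ((hasDerivAt_const t x).prodMk ((hasDerivAt_const t y).prodMk (hasDerivAt_id t)))

private lemma pd_contDiff {m n : ℕ∞} {G : ℝ × ℝ × ℝ → ℝ}
    (hG : ContDiff ℝ n G) (hmn : (m : WithTop ℕ∞) + 1 ≤ (n : WithTop ℕ∞)) (v : ℝ × ℝ × ℝ) :
    ContDiff ℝ m (pd G v) :=
  (hG.fderiv_right hmn).clm_apply contDiff_const

private lemma pd_comm {G : ℝ × ℝ × ℝ → ℝ} (hG : ContDiff ℝ 2 G) (u v q : ℝ × ℝ × ℝ) :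
    pd (pd G u) v q = pd (pd G v) u q := by
  have hdiff : Differentiable ℝ G := hG.differentiable (by norm_num)
  have hf : ∀ r, HasFDerivAt G (fderiv ℝ G r) r := fun r => (hdiff r).hasFDerivAt
  have hG1 : ContDiff ℝ 1 (fderiv ℝ G) := hG.fderiv_right (by norm_num)
  have hx : HasFDerivAt (fderiv ℝ G) (fderiv ℝ (fderiv ℝ G) q) q :=
    ((hG1.differentiable one_ne_zero) q).hasFDerivAt
  have hsym := second_derivative_symmetric hf hx u v
  have key : ∀ z : ℝ × ℝ × ℝ, fderiv ℝ (pd G z) q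
      = (ContinuousLinearMap.apply ℝ ℝ z).comp (fderiv ℝ (fderiv ℝ G) q) := fun z =>
    (((ContinuousLinearMap.apply ℝ ℝ z).hasFDerivAt).comp q hx).fderiv
  show fderiv ℝ (pd G u) q v = fderiv ℝ (pd G v) q u
  rw [key u, key v]
  simp only [ContinuousLinearMap.coe_comp', Function.comp_apply,
    ContinuousLinearMap.apply_apply]
  exact hsym.symm

private lemma pd_add {f g : ℝ × ℝ × ℝ → ℝ} (c : ℝ) (hf : Differentiable ℝ f)
    (hg : Differentiable ℝ g) (v q : ℝ × ℝ × ℝ) :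
    pd (fun r => f r + c * g r) v q = pd f v q + c * pd g v q := by
  unfold pd
  rw [fderiv_fun_add (hf q) ((hg q).const_mul c), fderiv_const_mul (hg q) c]
  simp

/-- Equation (equ_L) of the paper: if `w(x,y,t)` is `C³`, `L := w + c·∂_y w` has
`L_y ≠ 0` everywhere, and `w_t + (σ²/2)w_{xx} = (σ²/(2c))L_x²/L_y` everywhere, then
`L_t + (σ²/2)L_{xx} = (σ²/(2c))L_x²/L_y + σ²L_xL_{xy}/L_y − (σ²/2)L_x²L_{yy}/L_y²`
everywhere. -/
theorem stmt_14
    (σ : ℝ → ℝ) (c : ℝ) (hc : 0 < c)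
    (w : ℝ → ℝ → ℝ → ℝ)
    (hw : ContDiff ℝ 3 (fun p : ℝ × ℝ × ℝ => w p.1 p.2.1 p.2.2))
    (L : ℝ → ℝ → ℝ → ℝ)
    (hLdef : ∀ x y t : ℝ, L x y t = w x y t + c * p2 w x y t)
    (hLy : ∀ x y t : ℝ, p2 L x y t ≠ 0)
    (hPDEw : ∀ x y t : ℝ,
      p3 w x y t + σ x ^ 2 / 2 * p11 w x y t
        = σ x ^ 2 / (2 * c) * (p1 L x y t) ^ 2 / p2 L x y t) :
    ∀ x y t : ℝ,
      p3 L x y t + σ x ^ 2 / 2 * p11 L x y t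
        = σ x ^ 2 / (2 * c) * (p1 L x y t) ^ 2 / p2 L x y t
          + σ x ^ 2 * p1 L x y t * p12 L x y t / p2 L x y t
          - σ x ^ 2 / 2 * (p1 L x y t) ^ 2 * p22 L x y t / (p2 L x y t) ^ 2 := by
  intro x y t
  set W : ℝ × ℝ × ℝ → ℝ := fun p : ℝ × ℝ × ℝ => w p.1 p.2.1 p.2.2 with hWdef
  have hW3 : ContDiff ℝ 3 W := hw
  have hW2 : ContDiff ℝ 2 W := hW3.of_le (by norm_num)
  have hWd : Differentiable ℝ W := hW3.differentiable (by norm_num)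
  have hP1c : ContDiff ℝ 2 (pd W e1) := pd_contDiff hW3 (by norm_num) e1
  have hP2c : ContDiff ℝ 2 (pd W e2) := pd_contDiff hW3 (by norm_num) e2
  have hP3c : ContDiff ℝ 2 (pd W e3) := pd_contDiff hW3 (by norm_num) e3
  -- partials of w in fderiv form
  have h1w : ∀ a b s : ℝ, p1 w a b s = pd W e1 (a, b, s) := fun a b s => (hasD1 (hWd _)).deriv
  have h2w : ∀ a b s : ℝ, p2 w a b s = pd W e2 (a, b, s) := fun a b s => (hasD2 (hWd _)).deriv
  have h3w : ∀ a b s : ℝ, p3 w a b s = pd W e3 (a, b, s) := fun a b s => (hasD3 (hWd _)).deriv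
  have h11w : ∀ a b s : ℝ, p11 w a b s = pd (pd W e1) e1 (a, b, s) := by
    intro a b s
    have he : (fun a' => p1 w a' b s) = fun a' => pd W e1 (a', b, s) :=
      funext fun a' => h1w a' b s
    show deriv (fun a' => p1 w a' b s) a = _
    rw [he]
    exact (hasD1 (hP1c.differentiable (by norm_num) _)).deriv
  -- the uncurried L
  set LU : ℝ × ℝ × ℝ → ℝ := fun r => W r + c * pd W e2 r with hLUdef
  have hLUc : ContDiff ℝ 2 LU := hW2.add (contDiff_const.mul hP2c)
  have hLUd : Differentiable ℝ LU := hLUc.differentiable (by norm_num)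
  have hLeq : ∀ a b s : ℝ, L a b s = LU (a, b, s) := by
    intro a b s
    rw [hLdef a b s, h2w a b s]
  have hp1L : ∀ a b s : ℝ, p1 L a b s = pd LU e1 (a, b, s) := by
    intro a b s
    have he : (fun a' => L a' b s) = fun a' => LU (a', b, s) := funext fun a' => hLeq a' b s
    show deriv (fun a' => L a' b s) a = _
    rw [he]
    exact (hasD1 (hLUd _)).deriv
  have hp2L : ∀ a b s : ℝ, p2 L a b s = pd LU e2 (a, b, s) := by
    intro a b s
    have he : (fun b' => L a b' s) = fun b' => LU (a, b', s) := funext fun b' => hLeq a b' s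
    show deriv (fun b' => L a b' s) b = _
    rw [he]
    exact (hasD2 (hLUd _)).deriv
  have hp3L : p3 L x y t = pd LU e3 (x, y, t) := by
    have he : (fun s' => L x y s') = fun s' => LU (x, y, s') := funext fun s' => hLeq x y s'
    show deriv (fun s' => L x y s') t = _
    rw [he]
    exact (hasD3 (hLUd _)).deriv
  have hpdLU1 : ContDiff ℝ 1 (pd LU e1) := pd_contDiff hLUc (by norm_num) e1
  have hpdLU2 : ContDiff ℝ 1 (pd LU e2) := pd_contDiff hLUc (by norm_num) e2
  have hp11L : p11 L x y t = pd (pd LU e1) e1 (x, y, t) := by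
    have he : (fun a' => p1 L a' y t) = fun a' => pd LU e1 (a', y, t) :=
      funext fun a' => hp1L a' y t
    show deriv (fun a' => p1 L a' y t) x = _
    rw [he]
    exact (hasD1 ((hpdLU1.differentiable one_ne_zero) _)).deriv
  -- decomposition of pd LU
  have hLU1 : ∀ q, pd LU e1 q = pd W e1 q + c * pd (pd W e2) e1 q := by
    intro q
    rw [hLUdef]
    exact pd_add c hWd (hP2c.differentiable (by norm_num)) e1 q
  have hLU3 : ∀ q, pd LU e3 q = pd W e3 q + c * pd (pd W e2) e3 q := by
    intro q
    rw [hLUdef]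
    exact pd_add c hWd (hP2c.differentiable (by norm_num)) e3 q
  have hsw : pd LU e1 = fun q => pd W e1 q + c * pd (pd W e1) e2 q := by
    funext q
    rw [hLU1 q, pd_comm hW2 e2 e1 q]
  have h11 : pd (pd LU e1) e1 (x, y, t)
      = pd (pd W e1) e1 (x, y, t) + c * pd (pd (pd W e1) e2) e1 (x, y, t) := by
    rw [hsw]
    exact pd_add c (hP1c.differentiable (by norm_num))
      ((pd_contDiff (m := 1) hP1c (by norm_num) e2).differentiable (by norm_num)) e1 (x, y, t)
  -- values for p3 L and p11 L
  have e_p3 : p3 L x y t = pd W e3 (x, y, t) + c * pd (pd W e3) e2 (x, y, t) := by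
    rw [hp3L, hLU3 (x, y, t), pd_comm hW2 e2 e3 (x, y, t)]
  have e_p11 : p11 L x y t
      = pd (pd W e1) e1 (x, y, t) + c * pd (pd (pd W e1) e1) e2 (x, y, t) := by
    rw [hp11L, h11, pd_comm hP1c e2 e1 (x, y, t)]
  -- derivative in y of the PDE right-hand side
  have hA : HasDerivAt (fun b => p1 L x b t) (p12 L x y t) y := by
    have he : (fun b => p1 L x b t) = fun b => pd LU e1 (x, b, t) :=
      funext fun b => hp1L x b t
    have hd : HasDerivAt (fun b => pd LU e1 (x, b, t)) (pd (pd LU e1) e2 (x, y, t)) y :=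
      hasD2 ((hpdLU1.differentiable one_ne_zero) _)
    rw [← he] at hd
    have heq : p12 L x y t = pd (pd LU e1) e2 (x, y, t) := hd.deriv
    rw [heq]
    exact hd
  have hB : HasDerivAt (fun b => p2 L x b t) (p22 L x y t) y := by
    have he : (fun b => p2 L x b t) = fun b => pd LU e2 (x, b, t) :=
      funext fun b => hp2L x b t
    have hd : HasDerivAt (fun b => pd LU e2 (x, b, t)) (pd (pd LU e2) e2 (x, y, t)) y :=
      hasD2 ((hpdLU2.differentiable one_ne_zero) _)
    rw [← he] at hd
    have heq : p22 L x y t = pd (pd LU e2) e2 (x, y, t) := hd.deriv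
    rw [heq]
    exact hd
  have hB0 : p2 L x y t ≠ 0 := hLy x y t
  have hψ : HasDerivAt
      (fun b => σ x ^ 2 / (2 * c) * (p1 L x b t) ^ 2 / (p2 L x b t))
      ((σ x ^ 2 / (2 * c) * ((2 : ℕ) * p1 L x y t ^ (2 - 1) * p12 L x y t) * p2 L x y t
        - σ x ^ 2 / (2 * c) * (p1 L x y t) ^ 2 * p22 L x y t) / (p2 L x y t) ^ 2) y :=
    (HasDerivAt.const_mul (σ x ^ 2 / (2 * c)) (hA.pow 2)).div hB hB0
  -- derivative in y of the PDE left-hand side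
  have hc1 : HasDerivAt (fun b => pd W e3 (x, b, t)) (pd (pd W e3) e2 (x, y, t)) y :=
    hasD2 (hP3c.differentiable (by norm_num) _)
  have hc2 : HasDerivAt (fun b => pd (pd W e1) e1 (x, b, t))
      (pd (pd (pd W e1) e1) e2 (x, y, t)) y :=
    hasD2 ((pd_contDiff (m := 1) hP1c (by norm_num) e1).differentiable (by norm_num) _)
  have hχ : HasDerivAt
      (fun b => pd W e3 (x, b, t) + σ x ^ 2 / 2 * pd (pd W e1) e1 (x, b, t))
      (pd (pd W e3) e2 (x, y, t) + σ x ^ 2 / 2 * pd (pd (pd W e1) e1) e2 (x, y, t)) y :=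
    hc1.add (HasDerivAt.const_mul (σ x ^ 2 / 2) hc2)
  have hχψ : (fun b => pd W e3 (x, b, t) + σ x ^ 2 / 2 * pd (pd W e1) e1 (x, b, t))
      = fun b => σ x ^ 2 / (2 * c) * (p1 L x b t) ^ 2 / (p2 L x b t) := by
    funext b
    rw [← h3w x b t, ← h11w x b t]
    exact hPDEw x b t
  rw [hχψ] at hχ
  have hval := hχ.unique hψ
  have hfirst : pd W e3 (x, y, t) + σ x ^ 2 / 2 * pd (pd W e1) e1 (x, y, t)
      = σ x ^ 2 / (2 * c) * (p1 L x y t) ^ 2 / p2 L x y t := by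
    rw [← h3w x y t, ← h11w x y t]
    exact hPDEw x y t
  rw [e_p3, e_p11]
  have hregroup : pd W e3 (x, y, t) + c * pd (pd W e3) e2 (x, y, t)
        + σ x ^ 2 / 2 * (pd (pd W e1) e1 (x, y, t) + c * pd (pd (pd W e1) e1) e2 (x, y, t))
      = (pd W e3 (x, y, t) + σ x ^ 2 / 2 * pd (pd W e1) e1 (x, y, t))
        + c * (pd (pd W e3) e2 (x, y, t)
          + σ x ^ 2 / 2 * pd (pd (pd W e1) e1) e2 (x, y, t)) := by ring
  rw [hregroup, hfirst, hval]
  have hcne : c ≠ 0 := ne_of_gt hc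
  field_simp
  ring
end

section
/- Let σ : ℝ → ℝ and c > 0. Let Ŷ : ℝ³ → ℝ (arguments (x, l, t)) be twice continuously differentiable with Ŷ_l(x,l,t) < 0 for all (x,l,t), satisfying Ŷ_t + (σ(x)²/2)·Ŷ_{xx} + (σ(x)²/(2c))·Ŷ_x² = 0 at every point. Let L̂ : ℝ³ → ℝ (arguments (x, y, t)) be twice continuously differentiable and satisfy Ŷ(x, L̂(x,y,t), t) = y for all (x,y,t). Then at every point (x,y,t), with partial derivatives of Ŷ evaluated at (x, L̂(x,y,t), t): (i) L̂_y = 1/Ŷ_l < 0 and L̂_x = −Ŷ_x/Ŷ_l; (ii) L̂ satisfies the quasilinear equation L̂_t + (σ(x)²/2)·(L̂_{xx} − 2·(L̂_x/L̂_y)·L̂_{xy} + (L̂_x²/L̂_y²)·L̂_{yy}) − (σ(x)²/(2c))·L̂_x²/L̂_y = 0. (Step 3 of the paper's regularity theorem: the PDE satisfied by L̂ defined implicitly from Ŷ.) -/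
private noncomputable def UC (f : ℝ → ℝ → ℝ → ℝ) : ℝ × ℝ × ℝ → ℝ := fun p => f p.1 p.2.1 p.2.2

private lemma clm3 (φ : ℝ × ℝ × ℝ →L[ℝ] ℝ) (a b c : ℝ) :
    φ (a, b, c) = a * φ (1,0,0) + b * φ (0,1,0) + c * φ (0,0,1) := by
  have h : (a, b, c) = a • ((1:ℝ),(0:ℝ),(0:ℝ)) + b • ((0:ℝ),(1:ℝ),(0:ℝ)) + c • ((0:ℝ),(0:ℝ),(1:ℝ)) := by
    simp [Prod.ext_iff]
  rw [h, map_add, map_add, map_smul, map_smul, map_smul]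
  simp [smul_eq_mul]

private lemma chain {f : ℝ × ℝ × ℝ → ℝ} {γ : ℝ → ℝ × ℝ × ℝ} {v : ℝ × ℝ × ℝ} {s : ℝ}
    (hf : DifferentiableAt ℝ f (γ s)) (hγ : HasDerivAt γ v s) :
    HasDerivAt (fun a => f (γ a)) (fderiv ℝ f (γ s) v) s := by
  exact hf.hasFDerivAt.comp_hasDerivAt s hγ

private lemma curve1 {g : ℝ → ℝ} {g' x : ℝ} (hg : HasDerivAt g g' x) (t : ℝ) :
    HasDerivAt (fun a => ((a : ℝ), g a, t)) ((1:ℝ), g', (0:ℝ)) x :=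
  (hasDerivAt_id x).prodMk (hg.prodMk (hasDerivAt_const x t))

private lemma curve2 {g : ℝ → ℝ} {g' y : ℝ} (x t : ℝ) (hg : HasDerivAt g g' y) :
    HasDerivAt (fun b => (x, g b, t)) ((0:ℝ), g', (0:ℝ)) y :=
  (hasDerivAt_const y x).prodMk (hg.prodMk (hasDerivAt_const y t))

private lemma curve3 {g : ℝ → ℝ} {g' t : ℝ} (x : ℝ) (hg : HasDerivAt g g' t) :
    HasDerivAt (fun s => (x, g s, s)) ((0:ℝ), g', (1:ℝ)) t :=
  (hasDerivAt_const t x).prodMk (hg.prodMk (hasDerivAt_id t))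

private lemma p1_eq {f : ℝ → ℝ → ℝ → ℝ} (hf : Differentiable ℝ (UC f)) (x l t : ℝ) :
    p1 f x l t = fderiv ℝ (UC f) (x, l, t) (1,0,0) :=
  (chain (f := UC f) (hf (x, l, t)) (curve1 (hasDerivAt_const x l) t)).deriv

private lemma p2_eq {f : ℝ → ℝ → ℝ → ℝ} (hf : Differentiable ℝ (UC f)) (x l t : ℝ) :
    p2 f x l t = fderiv ℝ (UC f) (x, l, t) (0,1,0) :=
  (chain (f := UC f) (hf (x, l, t)) (curve2 x t (hasDerivAt_id l))).deriv

private lemma p3_eq {f : ℝ → ℝ → ℝ → ℝ} (hf : Differentiable ℝ (UC f)) (x l t : ℝ) :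
    p3 f x l t = fderiv ℝ (UC f) (x, l, t) (0,0,1) :=
  (chain (f := UC f) (hf (x, l, t)) (curve3 x (hasDerivAt_const t l))).deriv

set_option maxHeartbeats 1000000 in
/-- Step 3 of the regularity theorem: let `Ŷ(x,l,t)` be `C²` with `Ŷ_l < 0` everywhere
and satisfy `Ŷ_t + (σ²/2)Ŷ_{xx} + (σ²/(2c))Ŷ_x² = 0`; let `L̂(x,y,t)` be `C²` with
`Ŷ(x, L̂(x,y,t), t) = y`. Then at every point (partials of `Ŷ` taken at `(x, L̂, t)`):
(i) `L̂_y = 1/Ŷ_l < 0` and `L̂_x = −Ŷ_x/Ŷ_l`; (ii) `L̂` satisfies the quasilinear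
equation `L̂_t + (σ²/2)(L̂_{xx} − 2(L̂_x/L̂_y)L̂_{xy} + (L̂_x²/L̂_y²)L̂_{yy})
− (σ²/(2c))L̂_x²/L̂_y = 0`. -/
theorem stmt_15
    (σ : ℝ → ℝ) (c : ℝ) (hc : 0 < c)
    (Y : ℝ → ℝ → ℝ → ℝ)
    (hY : ContDiff ℝ 2 (fun p : ℝ × ℝ × ℝ => Y p.1 p.2.1 p.2.2))
    (hYl : ∀ x l t : ℝ, p2 Y x l t < 0)
    (hPDEY : ∀ x l t : ℝ,
      p3 Y x l t + σ x ^ 2 / 2 * p11 Y x l t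
        + σ x ^ 2 / (2 * c) * (p1 Y x l t) ^ 2 = 0)
    (Lh : ℝ → ℝ → ℝ → ℝ)
    (hLh : ContDiff ℝ 2 (fun p : ℝ × ℝ × ℝ => Lh p.1 p.2.1 p.2.2))
    (hinv : ∀ x y t : ℝ, Y x (Lh x y t) t = y) :
    ∀ x y t : ℝ,
      (p2 Lh x y t = 1 / p2 Y x (Lh x y t) t
        ∧ p2 Lh x y t < 0
        ∧ p1 Lh x y t = -(p1 Y x (Lh x y t) t) / p2 Y x (Lh x y t) t)
      ∧ p3 Lh x y t
          + σ x ^ 2 / 2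
            * (p11 Lh x y t
              - 2 * (p1 Lh x y t / p2 Lh x y t) * p12 Lh x y t
              + (p1 Lh x y t) ^ 2 / (p2 Lh x y t) ^ 2 * p22 Lh x y t)
          - σ x ^ 2 / (2 * c) * (p1 Lh x y t) ^ 2 / p2 Lh x y t = 0 := by
  have hYc : ContDiff ℝ 2 (UC Y) := hY
  have hLc : ContDiff ℝ 2 (UC Lh) := hLh
  have hFd : Differentiable ℝ (UC Y) := hYc.differentiable (by norm_num)
  have hGd : Differentiable ℝ (UC Lh) := hLc.differentiable (by norm_num)
  have hA1 : ContDiff ℝ 1 (fun p : ℝ × ℝ × ℝ => fderiv ℝ (UC Y) p (1,0,0)) :=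
    (hYc.fderiv_right (by norm_num)).clm_apply contDiff_const
  have hA2 : ContDiff ℝ 1 (fun p : ℝ × ℝ × ℝ => fderiv ℝ (UC Y) p (0,1,0)) :=
    (hYc.fderiv_right (by norm_num)).clm_apply contDiff_const
  have hC1 : ContDiff ℝ 1 (fun p : ℝ × ℝ × ℝ => fderiv ℝ (UC Lh) p (1,0,0)) :=
    (hLc.fderiv_right (by norm_num)).clm_apply contDiff_const
  have hC2 : ContDiff ℝ 1 (fun p : ℝ × ℝ × ℝ => fderiv ℝ (UC Lh) p (0,1,0)) :=
    (hLc.fderiv_right (by norm_num)).clm_apply contDiff_const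
  -- slice derivatives of Lh
  have hLx : ∀ a b s : ℝ, HasDerivAt (fun a' => Lh a' b s) (p1 Lh a b s) a := by
    intro a b s
    have h := chain (f := UC Lh) (γ := fun a' => (a', b, s)) (hGd _)
      (curve1 (hasDerivAt_const a b) s)
    rw [p1_eq hGd]; exact h
  have hLy : ∀ a b s : ℝ, HasDerivAt (fun b' => Lh a b' s) (p2 Lh a b s) b := by
    intro a b s
    have h := chain (f := UC Lh) (γ := fun b' => (a, b', s)) (hGd _)
      (curve2 a s (hasDerivAt_id b))
    rw [p2_eq hGd]; exact h
  have hLt : ∀ a b s : ℝ, HasDerivAt (fun s' => Lh a b s') (p3 Lh a b s) s := by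
    intro a b s
    have h := chain (f := UC Lh) (γ := fun s' => (a, b, s')) (hGd _)
      (curve3 a (hasDerivAt_const s b))
    rw [p3_eq hGd]; exact h
  -- first-order identities from the implicit relation
  have H1 : ∀ a b s : ℝ, fderiv ℝ (UC Y) (a, Lh a b s, s) (1,0,0)
      + fderiv ℝ (UC Y) (a, Lh a b s, s) (0,1,0) * p1 Lh a b s = 0 := by
    intro a b s
    have h : HasDerivAt (fun a' => UC Y (a', Lh a' b s, s))
        (fderiv ℝ (UC Y) (a, Lh a b s, s) (1, p1 Lh a b s, 0)) a :=
      chain (hFd _) (curve1 (hLx a b s) s)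
    have hcn : (fun a' => UC Y (a', Lh a' b s, s)) = fun _ => b := funext fun a' => hinv a' b s
    rw [hcn] at h
    have h0 : fderiv ℝ (UC Y) (a, Lh a b s, s) (1, p1 Lh a b s, 0) = 0 :=
      h.unique (hasDerivAt_const a b)
    rw [clm3] at h0
    linear_combination h0
  have H2 : ∀ a b s : ℝ, fderiv ℝ (UC Y) (a, Lh a b s, s) (0,1,0) * p2 Lh a b s = 1 := by
    intro a b s
    have h : HasDerivAt (fun b' => UC Y (a, Lh a b' s, s))
        (fderiv ℝ (UC Y) (a, Lh a b s, s) (0, p2 Lh a b s, 0)) b :=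
      chain (hFd _) (curve2 a s (hLy a b s))
    have hcn : (fun b' => UC Y (a, Lh a b' s, s)) = fun b' => b' := funext fun b' => hinv a b' s
    rw [hcn] at h
    have h0 : fderiv ℝ (UC Y) (a, Lh a b s, s) (0, p2 Lh a b s, 0) = 1 :=
      h.unique (hasDerivAt_id b)
    rw [clm3] at h0
    linear_combination h0
  intro x y t
  have H3 : fderiv ℝ (UC Y) (x, Lh x y t, t) (0,1,0) * p3 Lh x y t
      + fderiv ℝ (UC Y) (x, Lh x y t, t) (0,0,1) = 0 := by
    have h : HasDerivAt (fun s' => UC Y (x, Lh x y s', s'))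
        (fderiv ℝ (UC Y) (x, Lh x y t, t) (0, p3 Lh x y t, 1)) t :=
      chain (hFd _) (curve3 x (hLt x y t))
    have hcn : (fun s' => UC Y (x, Lh x y s', s')) = fun _ => y := funext fun s' => hinv x y s'
    rw [hcn] at h
    have h0 : fderiv ℝ (UC Y) (x, Lh x y t, t) (0, p3 Lh x y t, 1) = 0 :=
      h.unique (hasDerivAt_const t y)
    rw [clm3] at h0
    linear_combination h0
  have hA2neg : fderiv ℝ (UC Y) (x, Lh x y t, t) (0,1,0) < 0 := by
    have h := hYl x (Lh x y t) t
    rwa [p2_eq hFd] at h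
  have hA2ne : fderiv ℝ (UC Y) (x, Lh x y t, t) (0,1,0) ≠ 0 := ne_of_lt hA2neg
  have i1 : p2 Lh x y t = 1 / p2 Y x (Lh x y t) t := by
    rw [p2_eq hFd, eq_div_iff hA2ne]
    linear_combination H2 x y t
  have i2 : p2 Lh x y t < 0 := by
    rw [i1, p2_eq hFd]; exact one_div_neg.mpr hA2neg
  have i3 : p1 Lh x y t = -(p1 Y x (Lh x y t) t) / p2 Y x (Lh x y t) t := by
    rw [p1_eq hFd, p2_eq hFd, eq_div_iff hA2ne]
    linear_combination H1 x y t
  refine ⟨⟨i1, i2, i3⟩, ?_⟩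
  -- second-derivative identifications
  have T11L : HasDerivAt (fun a => p1 Lh a y t)
      (fderiv ℝ (fun p : ℝ × ℝ × ℝ => fderiv ℝ (UC Lh) p (1,0,0)) (x, y, t) (1,0,0)) x := by
    have e : (fun a => p1 Lh a y t) = fun a => fderiv ℝ (UC Lh) (a, y, t) (1,0,0) :=
      funext fun a => p1_eq hGd a y t
    rw [e]
    exact chain (f := fun p : ℝ × ℝ × ℝ => fderiv ℝ (UC Lh) p (1,0,0))
      (γ := fun a => (a, y, t)) ((hC1.differentiable one_ne_zero) _)
      (curve1 (hasDerivAt_const x y) t)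
  have hp11L : p11 Lh x y t
      = fderiv ℝ (fun p : ℝ × ℝ × ℝ => fderiv ℝ (UC Lh) p (1,0,0)) (x, y, t) (1,0,0) := T11L.deriv
  have T12L : HasDerivAt (fun b => p1 Lh x b t)
      (fderiv ℝ (fun p : ℝ × ℝ × ℝ => fderiv ℝ (UC Lh) p (1,0,0)) (x, y, t) (0,1,0)) y := by
    have e : (fun b => p1 Lh x b t) = fun b => fderiv ℝ (UC Lh) (x, b, t) (1,0,0) :=
      funext fun b => p1_eq hGd x b t
    rw [e]
    exact chain (f := fun p : ℝ × ℝ × ℝ => fderiv ℝ (UC Lh) p (1,0,0))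
      (γ := fun b => (x, b, t)) ((hC1.differentiable one_ne_zero) _)
      (curve2 x t (hasDerivAt_id y))
  have hp12L : p12 Lh x y t
      = fderiv ℝ (fun p : ℝ × ℝ × ℝ => fderiv ℝ (UC Lh) p (1,0,0)) (x, y, t) (0,1,0) := T12L.deriv
  have T22L : HasDerivAt (fun b => p2 Lh x b t)
      (fderiv ℝ (fun p : ℝ × ℝ × ℝ => fderiv ℝ (UC Lh) p (0,1,0)) (x, y, t) (0,1,0)) y := by
    have e : (fun b => p2 Lh x b t) = fun b => fderiv ℝ (UC Lh) (x, b, t) (0,1,0) :=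
      funext fun b => p2_eq hGd x b t
    rw [e]
    exact chain (f := fun p : ℝ × ℝ × ℝ => fderiv ℝ (UC Lh) p (0,1,0))
      (γ := fun b => (x, b, t)) ((hC2.differentiable one_ne_zero) _)
      (curve2 x t (hasDerivAt_id y))
  have hp22L : p22 Lh x y t
      = fderiv ℝ (fun p : ℝ × ℝ × ℝ => fderiv ℝ (UC Lh) p (0,1,0)) (x, y, t) (0,1,0) := T22L.deriv
  have T11Y : HasDerivAt (fun a => p1 Y a (Lh x y t) t)
      (fderiv ℝ (fun p : ℝ × ℝ × ℝ => fderiv ℝ (UC Y) p (1,0,0)) (x, Lh x y t, t) (1,0,0)) x := by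
    have e : (fun a => p1 Y a (Lh x y t) t)
        = fun a => fderiv ℝ (UC Y) (a, Lh x y t, t) (1,0,0) :=
      funext fun a => p1_eq hFd a (Lh x y t) t
    rw [e]
    exact chain (f := fun p : ℝ × ℝ × ℝ => fderiv ℝ (UC Y) p (1,0,0))
      (γ := fun a => (a, Lh x y t, t)) ((hA1.differentiable one_ne_zero) _)
      (curve1 (hasDerivAt_const x (Lh x y t)) t)
  have hp11Y : p11 Y x (Lh x y t) t
      = fderiv ℝ (fun p : ℝ × ℝ × ℝ => fderiv ℝ (UC Y) p (1,0,0)) (x, Lh x y t, t) (1,0,0) :=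
    T11Y.deriv
  -- second-order equations
  have hγx : HasDerivAt (fun a => (a, Lh a y t, t)) ((1:ℝ), p1 Lh x y t, (0:ℝ)) x :=
    curve1 (hLx x y t) t
  have hγy : HasDerivAt (fun b => (x, Lh x b t, t)) ((0:ℝ), p2 Lh x y t, (0:ℝ)) y :=
    curve2 x t (hLy x y t)
  have TA1x : HasDerivAt (fun a => fderiv ℝ (UC Y) (a, Lh a y t, t) (1,0,0))
      (fderiv ℝ (fun p : ℝ × ℝ × ℝ => fderiv ℝ (UC Y) p (1,0,0)) (x, Lh x y t, t)
        (1, p1 Lh x y t, 0)) x :=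
    chain ((hA1.differentiable one_ne_zero) _) hγx
  have TA2x : HasDerivAt (fun a => fderiv ℝ (UC Y) (a, Lh a y t, t) (0,1,0))
      (fderiv ℝ (fun p : ℝ × ℝ × ℝ => fderiv ℝ (UC Y) p (0,1,0)) (x, Lh x y t, t)
        (1, p1 Lh x y t, 0)) x :=
    chain ((hA2.differentiable one_ne_zero) _) hγx
  have TA1y : HasDerivAt (fun b => fderiv ℝ (UC Y) (x, Lh x b t, t) (1,0,0))
      (fderiv ℝ (fun p : ℝ × ℝ × ℝ => fderiv ℝ (UC Y) p (1,0,0)) (x, Lh x y t, t)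
        (0, p2 Lh x y t, 0)) y :=
    chain ((hA1.differentiable one_ne_zero) _) hγy
  have TA2y : HasDerivAt (fun b => fderiv ℝ (UC Y) (x, Lh x b t, t) (0,1,0))
      (fderiv ℝ (fun p : ℝ × ℝ × ℝ => fderiv ℝ (UC Y) p (0,1,0)) (x, Lh x y t, t)
        (0, p2 Lh x y t, 0)) y :=
    chain ((hA2.differentiable one_ne_zero) _) hγy
  have Ex0 : HasDerivAt (fun a => fderiv ℝ (UC Y) (a, Lh a y t, t) (1,0,0)
        + fderiv ℝ (UC Y) (a, Lh a y t, t) (0,1,0) * p1 Lh a y t)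
      (fderiv ℝ (fun p : ℝ × ℝ × ℝ => fderiv ℝ (UC Y) p (1,0,0)) (x, Lh x y t, t)
          (1, p1 Lh x y t, 0)
        + (fderiv ℝ (fun p : ℝ × ℝ × ℝ => fderiv ℝ (UC Y) p (0,1,0)) (x, Lh x y t, t)
              (1, p1 Lh x y t, 0) * p1 Lh x y t
          + fderiv ℝ (UC Y) (x, Lh x y t, t) (0,1,0)
            * fderiv ℝ (fun p : ℝ × ℝ × ℝ => fderiv ℝ (UC Lh) p (1,0,0)) (x, y, t) (1,0,0))) x :=
    TA1x.add (TA2x.mul T11L)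
  have hzx : (fun a => fderiv ℝ (UC Y) (a, Lh a y t, t) (1,0,0)
      + fderiv ℝ (UC Y) (a, Lh a y t, t) (0,1,0) * p1 Lh a y t) = fun _ => (0:ℝ) :=
    funext fun a => H1 a y t
  rw [hzx] at Ex0
  have Ex := Ex0.unique (hasDerivAt_const x 0)
  rw [clm3 _ 1 (p1 Lh x y t) 0, clm3 _ 1 (p1 Lh x y t) 0] at Ex
  have Ey0 : HasDerivAt (fun b => fderiv ℝ (UC Y) (x, Lh x b t, t) (1,0,0)
        + fderiv ℝ (UC Y) (x, Lh x b t, t) (0,1,0) * p1 Lh x b t)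
      (fderiv ℝ (fun p : ℝ × ℝ × ℝ => fderiv ℝ (UC Y) p (1,0,0)) (x, Lh x y t, t)
          (0, p2 Lh x y t, 0)
        + (fderiv ℝ (fun p : ℝ × ℝ × ℝ => fderiv ℝ (UC Y) p (0,1,0)) (x, Lh x y t, t)
              (0, p2 Lh x y t, 0) * p1 Lh x y t
          + fderiv ℝ (UC Y) (x, Lh x y t, t) (0,1,0)
            * fderiv ℝ (fun p : ℝ × ℝ × ℝ => fderiv ℝ (UC Lh) p (1,0,0)) (x, y, t) (0,1,0))) y :=
    TA1y.add (TA2y.mul T12L)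
  have hzy : (fun b => fderiv ℝ (UC Y) (x, Lh x b t, t) (1,0,0)
      + fderiv ℝ (UC Y) (x, Lh x b t, t) (0,1,0) * p1 Lh x b t) = fun _ => (0:ℝ) :=
    funext fun b => H1 x b t
  rw [hzy] at Ey0
  have Ey := Ey0.unique (hasDerivAt_const y 0)
  rw [clm3 _ 0 (p2 Lh x y t) 0, clm3 _ 0 (p2 Lh x y t) 0] at Ey
  have Eyy0 : HasDerivAt (fun b => fderiv ℝ (UC Y) (x, Lh x b t, t) (0,1,0) * p2 Lh x b t)
      (fderiv ℝ (fun p : ℝ × ℝ × ℝ => fderiv ℝ (UC Y) p (0,1,0)) (x, Lh x y t, t)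
          (0, p2 Lh x y t, 0) * p2 Lh x y t
        + fderiv ℝ (UC Y) (x, Lh x y t, t) (0,1,0)
          * fderiv ℝ (fun p : ℝ × ℝ × ℝ => fderiv ℝ (UC Lh) p (0,1,0)) (x, y, t) (0,1,0)) y :=
    TA2y.mul T22L
  have hzyy : (fun b => fderiv ℝ (UC Y) (x, Lh x b t, t) (0,1,0) * p2 Lh x b t)
      = fun _ => (1:ℝ) := funext fun b => H2 x b t
  rw [hzyy] at Eyy0
  have Eyy := Eyy0.unique (hasDerivAt_const y 1)
  rw [clm3 _ 0 (p2 Lh x y t) 0] at Eyy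
  -- symmetry of the second derivative of Y
  have hf2 : HasFDerivAt (fderiv ℝ (UC Y))
      (fderiv ℝ (fderiv ℝ (UC Y)) (x, Lh x y t, t)) (x, Lh x y t, t) :=
    ((((hYc.fderiv_right (by norm_num)).differentiable one_ne_zero)) _).hasFDerivAt
  have hsymm := second_derivative_symmetric (f := UC Y) (fun p => (hFd p).hasFDerivAt) hf2
  have h12 : HasFDerivAt (fun p : ℝ × ℝ × ℝ => fderiv ℝ (UC Y) p (1,0,0))
      ((fderiv ℝ (fderiv ℝ (UC Y)) (x, Lh x y t, t)).flip ((1:ℝ),(0:ℝ),(0:ℝ)))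
      (x, Lh x y t, t) := by
    simpa using hf2.clm_apply (hasFDerivAt_const ((1:ℝ),(0:ℝ),(0:ℝ)) (x, Lh x y t, t))
  have h21 : HasFDerivAt (fun p : ℝ × ℝ × ℝ => fderiv ℝ (UC Y) p (0,1,0))
      ((fderiv ℝ (fderiv ℝ (UC Y)) (x, Lh x y t, t)).flip ((0:ℝ),(1:ℝ),(0:ℝ)))
      (x, Lh x y t, t) := by
    simpa using hf2.clm_apply (hasFDerivAt_const ((0:ℝ),(1:ℝ),(0:ℝ)) (x, Lh x y t, t))
  have esym : fderiv ℝ (fun p : ℝ × ℝ × ℝ => fderiv ℝ (UC Y) p (1,0,0)) (x, Lh x y t, t) (0,1,0)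
      = fderiv ℝ (fun p : ℝ × ℝ × ℝ => fderiv ℝ (UC Y) p (0,1,0)) (x, Lh x y t, t) (1,0,0) := by
    rw [h12.fderiv, h21.fderiv]
    simpa using hsymm (0,1,0) (1,0,0)
  -- PDE for Y at the relevant point
  have epde := hPDEY x (Lh x y t) t
  rw [p3_eq hFd, p1_eq hFd, hp11Y] at epde
  -- explicit values
  have Ltv : p3 Lh x y t
      = -(fderiv ℝ (UC Y) (x, Lh x y t, t) (0,0,1))
        / fderiv ℝ (UC Y) (x, Lh x y t, t) (0,1,0) := by
    rw [eq_div_iff hA2ne]; linear_combination H3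
  have Lxv : p1 Lh x y t
      = -(fderiv ℝ (UC Y) (x, Lh x y t, t) (1,0,0))
        / fderiv ℝ (UC Y) (x, Lh x y t, t) (0,1,0) := by
    rw [eq_div_iff hA2ne]; linear_combination H1 x y t
  have Lyv : p2 Lh x y t = 1 / fderiv ℝ (UC Y) (x, Lh x y t, t) (0,1,0) := by
    rw [eq_div_iff hA2ne]; linear_combination H2 x y t
  have M11v : fderiv ℝ (fun p : ℝ × ℝ × ℝ => fderiv ℝ (UC Lh) p (1,0,0)) (x, y, t) (1,0,0)
      = (-(fderiv ℝ (fun p : ℝ × ℝ × ℝ => fderiv ℝ (UC Y) p (1,0,0)) (x, Lh x y t, t) (1,0,0))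
          - (fderiv ℝ (fun p : ℝ × ℝ × ℝ => fderiv ℝ (UC Y) p (1,0,0)) (x, Lh x y t, t) (0,1,0)
            + fderiv ℝ (fun p : ℝ × ℝ × ℝ => fderiv ℝ (UC Y) p (0,1,0)) (x, Lh x y t, t) (1,0,0))
            * p1 Lh x y t
          - fderiv ℝ (fun p : ℝ × ℝ × ℝ => fderiv ℝ (UC Y) p (0,1,0)) (x, Lh x y t, t) (0,1,0)
            * p1 Lh x y t ^ 2)
        / fderiv ℝ (UC Y) (x, Lh x y t, t) (0,1,0) := by
    rw [eq_div_iff hA2ne]; linear_combination Ex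
  have M12v : fderiv ℝ (fun p : ℝ × ℝ × ℝ => fderiv ℝ (UC Lh) p (1,0,0)) (x, y, t) (0,1,0)
      = (-(fderiv ℝ (fun p : ℝ × ℝ × ℝ => fderiv ℝ (UC Y) p (1,0,0)) (x, Lh x y t, t) (0,1,0))
            * p2 Lh x y t
          - fderiv ℝ (fun p : ℝ × ℝ × ℝ => fderiv ℝ (UC Y) p (0,1,0)) (x, Lh x y t, t) (0,1,0)
            * p2 Lh x y t * p1 Lh x y t)
        / fderiv ℝ (UC Y) (x, Lh x y t, t) (0,1,0) := by
    rw [eq_div_iff hA2ne]; linear_combination Ey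
  have M22v : fderiv ℝ (fun p : ℝ × ℝ × ℝ => fderiv ℝ (UC Lh) p (0,1,0)) (x, y, t) (0,1,0)
      = (-(fderiv ℝ (fun p : ℝ × ℝ × ℝ => fderiv ℝ (UC Y) p (0,1,0)) (x, Lh x y t, t) (0,1,0))
            * p2 Lh x y t ^ 2)
        / fderiv ℝ (UC Y) (x, Lh x y t, t) (0,1,0) := by
    rw [eq_div_iff hA2ne]; linear_combination Eyy
  have A3v : fderiv ℝ (UC Y) (x, Lh x y t, t) (0,0,1)
      = -(σ x ^ 2 / 2
            * fderiv ℝ (fun p : ℝ × ℝ × ℝ => fderiv ℝ (UC Y) p (1,0,0)) (x, Lh x y t, t) (1,0,0)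
          + σ x ^ 2 / (2 * c) * fderiv ℝ (UC Y) (x, Lh x y t, t) (1,0,0) ^ 2) := by
    linear_combination epde
  rw [hp11L, hp12L, hp22L, M11v, M12v, M22v, Ltv, A3v, esym, Lxv, Lyv]
  have h2ne : (2:ℝ) ≠ 0 := two_ne_zero
  field_simp
  ring
end

section
/- The range 𝓛 = {G(x,y) : (x,y) ∈ ℝ²} of G is an open subset of ℝ. (The paper's Remark that the set of attainable values l of the function L(·,·,T) is an open set.) -/
/-- The range of a continuous strictly monotone real function is open. -/
lemma isOpen_range_of_strictMono_continuous (f : ℝ → ℝ)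
    (hm : StrictMono f) (hcont : Continuous f) : IsOpen (Set.range f) := by
  rw [isOpen_iff_mem_nhds]
  rintro z ⟨t, rfl⟩
  have h1 : f (t - 1) < f t := hm (by linarith)
  have h2 : f t < f (t + 1) := hm (by linarith)
  have hsub : Set.Ioo (f (t - 1)) (f (t + 1)) ⊆ Set.range f := by
    have := intermediate_value_Ioo (by linarith : t - 1 ≤ t + 1)
      hcont.continuousOn
    exact this.trans ((Set.image_subset_range f _))
  exact Filter.mem_of_superset (Ioo_mem_nhds h1 h2) hsub

/-- The range `𝓛 = {G(x,y) : (x,y) ∈ ℝ²}` of `G` is an open subset of `ℝ`. -/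
theorem stmt_17
    (UA UP : ℝ → ℝ) (c : ℝ) (hc : 0 < c)
    (hUA : ContDiff ℝ 2 UA) (hUP : ContDiff ℝ 2 UP)
    (hUA' : ∀ z, 0 < deriv UA z) (hUA'' : ∀ z, deriv (deriv UA) z ≤ 0)
    (hUP' : ∀ z, 0 < deriv UP z) (hUP'' : ∀ z, deriv (deriv UP) z ≤ 0)
    (hbij : Function.Bijective UA) :
    IsOpen {z : ℝ | ∃ x y : ℝ, G UA UP c x y = z} := by
  have hset : {z : ℝ | ∃ x y : ℝ, G UA UP c x y = z}
      = ⋃ y : ℝ, Set.range (fun x => G UA UP c x y) := by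
    ext z
    simp only [Set.mem_setOf_eq, Set.mem_iUnion, Set.mem_range]
    exact ⟨fun ⟨x, y, h⟩ => ⟨y, x, h⟩, fun ⟨y, x, h⟩ => ⟨x, y, h⟩⟩
  rw [hset]
  -- basic regularity facts for UP
  have hUPdiff : Differentiable ℝ UP := hUP.differentiable (by norm_num)
  have hUP'cd : ContDiff ℝ 1 (deriv UP) := by
    have h2 : ContDiff ℝ (1 + 1 : WithTop ℕ∞) UP := by
      have e : (1 + 1 : WithTop ℕ∞) = 2 := by norm_num
      rw [e]; exact hUP
    exact ((contDiff_succ_iff_deriv).mp h2).2.2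
  have hUP'diff : Differentiable ℝ (deriv UP) := hUP'cd.differentiable (by norm_num)
  apply isOpen_iUnion
  intro y
  set a := Function.invFun UA y with ha
  -- the derivative info
  have hd : ∀ x : ℝ, HasDerivAt (fun x => G UA UP c x y)
      (deriv UP (x - a) - c * deriv (deriv UP) (x - a) / deriv UA a) x := by
    intro x
    have hid : HasDerivAt (fun x : ℝ => x - a) 1 x := by
      simpa using (hasDerivAt_id x).sub_const a
    have h1 : HasDerivAt (fun x => UP (x - a)) (deriv UP (x - a)) x := by
      simpa [Function.comp_def] using ((hUPdiff (x - a)).hasDerivAt).comp x hid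
    have h2 : HasDerivAt (fun x => deriv UP (x - a)) (deriv (deriv UP) (x - a)) x := by
      simpa [Function.comp_def] using ((hUP'diff (x - a)).hasDerivAt).comp x hid
    have h3 : HasDerivAt (fun x => c * deriv UP (x - a) / deriv UA a)
        (c * deriv (deriv UP) (x - a) / deriv UA a) x := by
      simpa [mul_comm, mul_div_assoc] using (h2.const_mul c).div_const (deriv UA a)
    simpa [G, ← ha, Pi.sub_def] using h1.sub h3
  have hmono : StrictMono (fun x => G UA UP c x y) := by
    exact strictMono_of_deriv_pos (fun x => by
        rw [(hd x).deriv]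
        have h1 : 0 < deriv UP (x - a) := hUP' _
        have h2 : c * deriv (deriv UP) (x - a) / deriv UA a ≤ 0 := by
          apply div_nonpos_of_nonpos_of_nonneg
          · exact mul_nonpos_of_nonneg_of_nonpos hc.le (hUP'' _)
          · exact (hUA' a).le
        linarith)
  have hcont : Continuous (fun x => G UA UP c x y) :=
    continuous_iff_continuousAt.mpr fun x => (hd x).continuousAt
  exact isOpen_range_of_strictMono_continuous _ hmono hcont
end
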